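/- If κ is an inaccessible cardinal and X ⊆ κ is unbounded in κ, then the forcing T¹(X), whose conditions are bounded 1-closed subsets of X ordered by end-extension, is κ-strategically closed. (Hellsten.) -/

import Mathlib

open FirstOrder FirstOrder.Language ZFSet
open scoped Classical

noncomputable section

def memLang : Language where
  Functions := fun _ => Empty
  Relations := fun n => match n with | 2 => Unit | _ => Empty

def memRel : memLang.Relations 2 := Unit.unit

def mem' (n : ℕ) (i j : Fin n) : memLang.BoundedFormula Empty n :=
  Relations.boundedFormula₂ memRel (Term.var (Sum.inr i)) (Term.var (Sum.inr j))

def eq' (n : ℕ) (i j : Fin n) : memLang.BoundedFormula Empty n :=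
  Term.bdEqual (Term.var (Sum.inr i)) (Term.var (Sum.inr j))

def extAx : memLang.Sentence :=
  ((((mem' 3 2 0).iff (mem' 3 2 1)).all.imp (eq' 2 0 1)).all).all

def pairAx : memLang.Sentence :=
  ((((mem' 3 0 2) ⊓ (mem' 3 1 2)).ex).all).all

def unionAx : memLang.Sentence :=
  (((((mem' 4 2 3) ⊓ (mem' 4 3 0)).imp (mem' 4 2 1)).all.all).ex).all

def foundAx : memLang.Sentence :=
  (((mem' 2 1 0).ex.imp
    (((mem' 2 1 0) ⊓ (((mem' 3 2 1).imp (mem' 3 2 0).not).all)).ex)).all)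


def infAx₁ : memLang.BoundedFormula Empty 1 :=
  ((mem' 2 1 0) ⊓ ((mem' 3 2 1).not.all)).ex

def infAx₂ : memLang.BoundedFormula Empty 1 :=
  ((mem' 2 1 0).imp
    (((mem' 3 2 0) ⊓ ((mem' 3 1 2) ⊓
      (((mem' 4 3 2).iff ((mem' 4 3 1) ⊔ (eq' 4 3 1))).all))).ex)).all

def infAx : memLang.Sentence := (infAx₁ ⊓ infAx₂).ex

def choiceHyp₁ : memLang.BoundedFormula Empty 1 :=
  ((mem' 2 1 0).imp ((mem' 3 2 1).ex)).all

def choiceHyp₂ : memLang.BoundedFormula Empty 1 :=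
  ((((mem' 3 1 0) ⊓ ((mem' 3 2 0) ⊓ (eq' 3 1 2).not)).imp
     (((mem' 4 3 1) ⊓ (mem' 4 3 2)).ex.not)).all).all

def choiceConcl : memLang.BoundedFormula Empty 1 :=
  (((mem' 3 2 0).imp
    (((mem' 4 3 2) ⊓ ((mem' 4 3 1) ⊓
       ((((mem' 5 4 2) ⊓ (mem' 5 4 1)).imp (eq' 5 4 3)).all))).ex)).all).ex

def choiceAx : memLang.Sentence :=
  (((choiceHyp₁ ⊓ choiceHyp₂).imp choiceConcl)).all

def sepAx (n : ℕ) (φ : memLang.BoundedFormula Empty (n + 2)) : memLang.Sentence :=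
  (((((mem' (n+3) ⟨n+2, by omega⟩ ⟨n+1, by omega⟩).iff
      ((mem' (n+3) ⟨n+2, by omega⟩ ⟨n, by omega⟩) ⊓ (φ.liftAt 1 (n+1)))).all).ex).all).alls

def collAx (n : ℕ) (φ : memLang.BoundedFormula Empty (n + 3)) : memLang.Sentence :=
  (((((mem' (n+2) ⟨n+1, by omega⟩ ⟨n, by omega⟩).imp φ.ex).all).imp
    ((((mem' (n+3) ⟨n+2, by omega⟩ ⟨n, by omega⟩).imp
        (((mem' (n+4) ⟨n+3, by omega⟩ ⟨n+1, by omega⟩) ⊓ (φ.liftAt 1 (n+1))).ex)).all).ex)).all).alls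

def ZFCminus : Set memLang.Sentence :=
  {extAx, pairAx, unionAx, foundAx, infAx, choiceAx}
    ∪ (⋃ n, Set.range (sepAx n)) ∪ (⋃ n, Set.range (collAx n))

end

noncomputable section

/-! ## Satisfaction in transitive sets -/

instance zfStr (M : ZFSet.{0}) : memLang.Structure M.toSet where
  funMap := fun {_} f _ => f.elim
  RelMap := fun {n} =>
    match n with
    | 2 => fun _ v => ((v 0 : M.toSet) : ZFSet) ∈ ((v 1 : M.toSet) : ZFSet)
    | 0 => fun r _ => r.elim
    | 1 => fun r _ => r.elim
    | (_+3) => fun r _ => r.elim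

/-- Realization of a formula in the membership structure `(M, ∈)`, with a valuation
taking values in `M`. -/
def RealizeIn (M : ZFSet.{0}) {n : ℕ} (φ : memLang.BoundedFormula Empty n)
    (v : Fin n → ZFSet.{0}) : Prop :=
  ∃ hv : ∀ i, v i ∈ M, φ.Realize (fun e => e.elim) (fun i => (⟨v i, hv i⟩ : M.toSet))

/-- `M ⊨ ZFC⁻`. -/
def ModelsZFCminus (M : ZFSet.{0}) : Prop :=
  ∀ φ ∈ ZFCminus, Sentence.Realize (↥M.toSet) φ

/-! ## Cardinals, ordinals and basic combinatorial notions -/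

/-- The cardinality of (the extension of) a ZF-set. -/
def zcard (x : ZFSet.{0}) : Cardinal := Cardinal.mk x.toSet

/-- `κ` is a (von Neumann) cardinal. -/
def IsCardinalZ (κ : ZFSet.{0}) : Prop :=
  κ.IsOrdinal ∧ ∀ β ∈ κ, zcard β < zcard κ

/-- `κ^{<κ} = κ`. -/
def PowLtEqSelf (κ : ZFSet.{0}) : Prop :=
  ∀ β ∈ κ, zcard κ ^ zcard β ≤ zcard κ

def zsucc (x : ZFSet.{0}) : ZFSet := insert x x

def natZ : ℕ → ZFSet.{0}
  | 0 => ∅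
  | n+1 => zsucc (natZ n)

def iterSucc (β : ZFSet.{0}) : ℕ → ZFSet
  | 0 => β
  | n+1 => zsucc (iterSucc β n)

def IsLimitZ (α : ZFSet.{0}) : Prop := α.IsOrdinal ∧ α ≠ ∅ ∧ ∀ β ∈ α, zsucc β ∈ α

/-- The value `f(x)` of a ZF-coded function `f` at `x`. -/
def app (f x : ZFSet.{0}) : ZFSet :=
  ⋃₀ (ZFSet.sep (fun y => ZFSet.pair x y ∈ f) (⋃₀ (⋃₀ f)))

/-- The restriction `f ↾ β` of a ZF-coded function. -/
def restrictF (f β : ZFSet.{0}) : ZFSet :=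
  ZFSet.sep (fun z => ∃ ξ ∈ β, ∃ y, z = ZFSet.pair ξ y) f

/-! ## κ-models, elementary embeddings and weak compactness,
relative to an ambient class `W` of sets (`W = Set.univ` is the ground universe `V`). -/

/-- `M` is a κ-model (computed relative to the universe `W`): it is transitive, of size `κ`,
contains `κ`, is closed under `<κ`-sequences lying in `W`, and satisfies `ZFC⁻`. -/
def IsKappaModelIn (W : Set ZFSet.{0}) (κ M : ZFSet.{0}) : Prop :=
  M ∈ W ∧ κ ∈ M ∧ M.IsTransitive ∧ zcard M = zcard κ ∧
  (∀ β ∈ κ, ∀ f : ZFSet, f ∈ W → ZFSet.IsFunc β M f → f ∈ M) ∧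
  ModelsZFCminus M

abbrev IsKappaModel (κ M : ZFSet.{0}) : Prop := IsKappaModelIn Set.univ κ M

/-- `j` is an elementary embedding from `(M, ∈)` to `(N, ∈)`. -/
def IsElemEmbedding (M N : ZFSet.{0}) (j : ZFSet.{0} → ZFSet.{0}) : Prop :=
  (∀ x ∈ M, j x ∈ N) ∧
  ∀ (n : ℕ) (φ : memLang.BoundedFormula Empty n) (v : Fin n → ZFSet),
    (∀ i, v i ∈ M) → (RealizeIn M φ v ↔ RealizeIn N φ (fun i => j (v i)))

/-- `j` has critical point `κ`: it fixes every ordinal below `κ` and moves `κ`. -/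
def HasCritPoint (j : ZFSet.{0} → ZFSet.{0}) (κ : ZFSet.{0}) : Prop :=
  (∀ x ∈ κ, j x = x) ∧ κ ∈ j κ

/-- `S` is a weakly compact subset of `κ`, computed relative to the universe `W`:
for every `A ⊆ κ` in `W` there are κ-models `M ∋ A, S` and `N` and an elementary
embedding `j : M → N` with critical point `κ` such that `κ ∈ j(S)`. -/
def IsWeaklyCompactIn (W : Set ZFSet.{0}) (κ S : ZFSet.{0}) : Prop :=
  S ⊆ κ ∧ ∀ A : ZFSet, A ∈ W → A ⊆ κ →
    ∃ (M N : ZFSet) (j : ZFSet → ZFSet),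
      IsKappaModelIn W κ M ∧ IsKappaModelIn W κ N ∧ A ∈ M ∧ S ∈ M ∧
      IsElemEmbedding M N j ∧ HasCritPoint j κ ∧ κ ∈ j S

abbrev IsWeaklyCompactSubset (κ S : ZFSet.{0}) : Prop := IsWeaklyCompactIn Set.univ κ S

/-- `κ` is a weakly compact cardinal (relative to the universe `W`). -/
def IsWCCardinalIn (W : Set ZFSet.{0}) (κ : ZFSet.{0}) : Prop :=
  IsCardinalZ κ ∧ PowLtEqSelf κ ∧ IsWeaklyCompactIn W κ κ

abbrev IsWCCardinal (κ : ZFSet.{0}) : Prop := IsWCCardinalIn Set.univ κ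

/-! ## Clubs, stationarity, inaccessibility, Mahloness -/

/-- `C` is a closed unbounded subset of the ordinal `γ`. -/
def IsClubIn (C γ : ZFSet.{0}) : Prop :=
  C ⊆ γ ∧ (∀ ξ ∈ γ, ∃ η ∈ C, ξ ∈ η ∨ ξ = η) ∧
  ∀ β ∈ γ, (∃ ξ, ξ ∈ β) → (∀ ξ ∈ β, ∃ η, η ∈ C ∧ η ∈ β ∧ ξ ∈ η) → β ∈ C

/-- `S` is a stationary subset of `γ`, relative to the universe `W`. -/
def IsStationaryIn (W : Set ZFSet.{0}) (S γ : ZFSet.{0}) : Prop :=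
  ∀ C : ZFSet, C ∈ W → IsClubIn C γ → ∃ x, x ∈ S ∧ x ∈ C

/-- `γ` is a regular cardinal, relative to the universe `W`. -/
def IsRegularIn (W : Set ZFSet.{0}) (γ : ZFSet.{0}) : Prop :=
  IsCardinalZ γ ∧
  ∀ β ∈ γ, ∀ f : ZFSet, f ∈ W → ZFSet.IsFunc β γ f →
    ∃ δ ∈ γ, ∀ ξ ∈ β, ∀ y, ZFSet.pair ξ y ∈ f → y ∈ δ

/-- `γ` is an inaccessible cardinal (regular, uncountable strong limit),
relative to the universe `W`. -/
def IsInaccessibleIn (W : Set ZFSet.{0}) (γ : ZFSet.{0}) : Prop :=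
  IsRegularIn W γ ∧ ZFSet.omega ∈ γ ∧
  ∀ β ∈ γ, ¬ ∃ f : ZFSet, f ∈ W ∧ ZFSet.IsFunc γ (ZFSet.powerset β) f ∧
    (∀ x x' y, ZFSet.pair x y ∈ f → ZFSet.pair x' y ∈ f → x = x')

/-- `γ` is a Mahlo cardinal: it is inaccessible and the inaccessibles below it
are stationary, relative to the universe `W`. -/
def IsMahloIn (W : Set ZFSet.{0}) (γ : ZFSet.{0}) : Prop :=
  IsInaccessibleIn W γ ∧
  IsStationaryIn W (ZFSet.sep (fun β => IsInaccessibleIn W β) γ) γ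

/-- `C` is 1-closed in `κ`: it contains every inaccessible `γ < κ` in which `C ∩ γ`
is stationary (relative to the universe `W`). -/
def IsOneClosedIn (W : Set ZFSet.{0}) (C κ : ZFSet.{0}) : Prop :=
  ∀ γ ∈ κ, IsInaccessibleIn W γ → IsStationaryIn W (C ∩ γ) γ → γ ∈ C

/-- `C` is 1-club in `κ`: stationary and 1-closed (relative to the universe `W`). -/
def IsOneClubIn (W : Set ZFSet.{0}) (C κ : ZFSet.{0}) : Prop :=
  IsStationaryIn W C κ ∧ IsOneClosedIn W C κ

/-! ## Traces and higher orders of weak compactness -/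

/-- The weakly compact trace operation. -/
def wcTraceIn (W : Set ZFSet.{0}) (κ X : ZFSet.{0}) : ZFSet :=
  ZFSet.sep (fun γ => IsWeaklyCompactIn W γ (X ∩ γ)) κ

/-- Finite iterates of the weakly compact trace operation (on the canonical
representatives of the classes `[X]₁`). -/
def iterWcTraceIn (W : Set ZFSet.{0}) (κ : ZFSet.{0}) : ℕ → ZFSet.{0} → ZFSet.{0}
  | 0, X => X
  | n+1, X => wcTraceIn W κ (iterWcTraceIn W κ n X)

/-- `κ` is an `n`-weakly compact cardinal (relative to the universe `W`):
all iterates `Tr^m_{wc}([κ]₁)` for `m < n` are nonzero, i.e. weakly compact. -/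
def IsNWeaklyCompactIn (W : Set ZFSet.{0}) (κ : ZFSet.{0}) (n : ℕ) : Prop :=
  ∀ m < n, IsWeaklyCompactIn W κ (iterWcTraceIn W κ m κ)

/-- `κ` is an `ω`-weakly compact cardinal (relative to the universe `W`). -/
def IsOmegaWeaklyCompactIn (W : Set ZFSet.{0}) (κ : ZFSet.{0}) : Prop :=
  ∀ n : ℕ, IsWeaklyCompactIn W κ (iterWcTraceIn W κ n κ)

/-- `S^β_n`: the Mahlo cardinals below `β` for `n = 0`, and the `n`-weakly compact
cardinals below `β` for `n > 0` (relative to the universe `W`). -/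
def SsetIn (W : Set ZFSet.{0}) (β : ZFSet.{0}) : ℕ → ZFSet
  | 0 => ZFSet.sep (fun α => IsMahloIn W α) β
  | n+1 => ZFSet.sep (fun α => IsNWeaklyCompactIn W α (n+1)) β

/-- The weakly compact reflection principle `Refl_wc(κ)` (relative to the universe `W`):
`κ` is weakly compact and every weakly compact subset of `κ` has a weakly compact
proper initial segment. -/
def ReflWcIn (W : Set ZFSet.{0}) (κ : ZFSet.{0}) : Prop :=
  IsWCCardinalIn W κ ∧
  ∀ S : ZFSet, S ∈ W → IsWeaklyCompactIn W κ S → ∃ γ ∈ κ, IsWeaklyCompactIn W γ (S ∩ γ)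

end

noncomputable section

/-! ## Forcing notions, generic filters, names and generic extensions -/

/-- The order of a ZF-coded partial order: `p ≤ q` iff `(p, q) ∈ R`. -/
def zle (R p q : ZFSet.{0}) : Prop := ZFSet.pair p q ∈ R

/-- `(P, R)` is a ZF-coded partial order (a forcing notion). -/
def IsPosetOn (P R : ZFSet.{0}) : Prop :=
  R ⊆ ZFSet.prod P P ∧ (∀ p ∈ P, zle R p p) ∧
  ∀ p q r : ZFSet, zle R p q → zle R q r → zle R p r

/-- `D` is a dense subset of the forcing notion `(P, R)`. -/
def IsDenseIn (P R D : ZFSet.{0}) : Prop :=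
  D ⊆ P ∧ ∀ p ∈ P, ∃ q ∈ D, zle R q p

/-- `G` (a class of conditions) is a filter on `(P, R)`. -/
def IsClassFilterOn (P R : ZFSet.{0}) (G : Set ZFSet.{0}) : Prop :=
  (∀ p ∈ G, p ∈ P) ∧ (∀ p ∈ G, ∀ q, q ∈ P → zle R p q → q ∈ G) ∧
  ∀ p ∈ G, ∀ q ∈ G, ∃ r, r ∈ G ∧ zle R r p ∧ zle R r q

/-- `G` is generic over the universe `V` for `(P, R)`: it is a filter meeting every
dense subset of `P` (lying in `V`). -/
def IsGenericOverV (P R : ZFSet.{0}) (G : Set ZFSet.{0}) : Prop :=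
  IsClassFilterOn P R G ∧ ∀ D : ZFSet, IsDenseIn P R D → ∃ q, q ∈ G ∧ q ∈ D

/-- `G` is generic for `(P, R)` over the class `W`: it is a filter meeting every
dense subset of `P` lying in `W`. -/
def IsGenericOverClass (W : Set ZFSet.{0}) (P R : ZFSet.{0}) (G : Set ZFSet.{0}) : Prop :=
  IsClassFilterOn P R G ∧ ∀ D : ZFSet, D ∈ W → IsDenseIn P R D → ∃ q, q ∈ G ∧ q ∈ D

/-- A ZF-coded filter on `(P, R)`. -/
def IsSetFilterOn (P R G : ZFSet.{0}) : Prop :=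
  G ⊆ P ∧ (∀ p ∈ G, ∀ q ∈ P, zle R p q → q ∈ G) ∧
  ∀ p ∈ G, ∀ q ∈ G, ∃ r ∈ G, zle R r p ∧ zle R r q

/-- `G` is a filter on `(P, R)` generic over the (set) model `M`. -/
def IsGenericOverSet (M P R G : ZFSet.{0}) : Prop :=
  IsSetFilterOn P R G ∧ ∀ D : ZFSet, D ∈ M → IsDenseIn P R D → ∃ q ∈ G, q ∈ D

/-- The image of a ZF-set under an arbitrary (class) function. -/
def myImage (f : ZFSet.{0} → ZFSet.{0}) (x : ZFSet.{0}) : ZFSet.{0} :=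
  ZFSet.range.{0,0} (fun a : (Quotient.out x).Type => f (ZFSet.mk ((Quotient.out x).Func a)))

/-- The evaluation `val_G(τ)` of a `P`-name `τ` by a filter `G`
(every ZF-set is regarded as a name). -/
def zval (G : Set ZFSet.{0}) : ZFSet.{0} → ZFSet.{0} :=
  (ZFSet.mem_wf.transGen).fix (fun τ rec =>
    myImage (fun σ => if h : Relation.TransGen (· ∈ ·) σ τ then rec σ h else ∅)
      (ZFSet.sep (fun σ => ∃ p, p ∈ G ∧ ZFSet.pair σ p ∈ τ) (⋃₀ (⋃₀ τ : ZFSet))))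

/-- The generic extension `V[G]` of the universe, as a class: all evaluations of names. -/
def VofG (G : Set ZFSet.{0}) : Set ZFSet.{0} := Set.range (zval G)

/-- The generic extension `M[G]` of a set model `M` by a class filter `G`:
the evaluations of all names lying in `M`. -/
def extClass (M : ZFSet.{0}) (G : Set ZFSet.{0}) : ZFSet.{0} := myImage (zval G) M

/-- The generic extension `M[G]` of a set model `M` by a set filter `G`. -/
def extSet (M G : ZFSet.{0}) : ZFSet.{0} := extClass M {x | x ∈ G}

/-- The check-name `x̌` of a ground model set `x` (relative to the forcing `P`). -/
def checkName (P : ZFSet.{0}) : ZFSet.{0} → ZFSet.{0} :=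
  ZFSet.mem_wf.fix (fun x rec =>
    ⋃₀ (myImage (fun y => if h : y ∈ x then myImage (fun p => ZFSet.pair (rec y h) p) P else ∅) x))

/-- The canonical name `Ġ` for the generic filter. -/
def genName (P : ZFSet.{0}) : ZFSet.{0} :=
  myImage (fun p => ZFSet.pair (checkName P p) p) P

/-- The ground model `V`, as a class. -/
def GroundV : Set ZFSet.{0} := Set.univ

/-- `(P, R)` is `κ`-c.c.: every antichain has size `< κ`. -/
def IsKappaCC (P R κ : ZFSet.{0}) : Prop :=
  ∀ A : ZFSet, A ⊆ P →
    (∀ p ∈ A, ∀ q ∈ A, p ≠ q → ¬ ∃ r ∈ P, zle R r p ∧ zle R r q) →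
    zcard A < zcard κ

/-! ## Games and strategic closure -/

/-- It is Player II's turn at stage `α`: `α` is a limit ordinal, or of the form `λ + (2n+1)`
(Player I moves first, at stage `0`, and Player II plays first at limit stages). -/
def IsIITurn (α : ZFSet.{0}) : Prop :=
  IsLimitZ α ∨ ∃ (β : ZFSet) (n : ℕ), (β = ∅ ∨ IsLimitZ β) ∧ α = iterSucc β (2*n+1)

/-- `f` is a ZF-coded descending sequence of conditions of `(P, R)` of length `α`. -/
def IsDescPlay (P R α f : ZFSet.{0}) : Prop :=
  ZFSet.IsFunc α P f ∧ ∀ β ∈ α, ∀ γ ∈ β, zle R (app f β) (app f γ)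

/-- `s` is (the graph of) a deterministic strategy. -/
def IsFunctionLike (s : ZFSet.{0}) : Prop :=
  ∀ x y y', ZFSet.pair x y ∈ s → ZFSet.pair x y' ∈ s → y = y'

/-- `s` is a winning strategy for Player II in the game `G_δ(P)`: along any descending play
(lying in the universe `W`) in which Player II has followed `s`, when it is Player II's turn
`s` provides a condition below all conditions played so far. -/
def IsWinningStratII (W : Set ZFSet.{0}) (P R δ s : ZFSet.{0}) : Prop :=
  ∀ α ∈ δ, ∀ f : ZFSet, f ∈ W → IsDescPlay P R α f →
    (∀ β ∈ α, IsIITurn β → ZFSet.pair (restrictF f β) (app f β) ∈ s) →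
    IsIITurn α →
    ∃ q, ZFSet.pair (restrictF f α) q ∈ s ∧ q ∈ P ∧ ∀ γ ∈ α, zle R q (app f γ)

/-- `(P, R)` is `δ`-strategically closed, relative to the universe `W`:
Player II has a winning strategy in the game of length `δ`. -/
def IsStratClosedIn (W : Set ZFSet.{0}) (P R δ : ZFSet.{0}) : Prop :=
  ∃ s, s ∈ W ∧ IsFunctionLike s ∧ IsWinningStratII W P R δ s

/-- `(P, R)` is `<κ`-strategically closed relative to `W`. -/
def IsLtStratClosedIn (W : Set ZFSet.{0}) (P R κ : ZFSet.{0}) : Prop :=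
  ∀ δ ∈ κ, IsStratClosedIn W P R δ

/-- `(P, R)` is `α⁺`-closed: every descending sequence of length `< α⁺`
(i.e. of length an ordinal of size `≤ |α|`) has a lower bound in `P`. -/
def IsSuccCardClosed (P R α : ZFSet.{0}) : Prop :=
  ∀ β : ZFSet, β.IsOrdinal → zcard β ≤ zcard α →
    ∀ f : ZFSet, IsDescPlay P R β f → ∃ q ∈ P, ∀ γ ∈ β, zle R q (app f γ)

/-! ## The 1-club shooting forcing `T¹(X)` -/

/-- `c` is bounded below `κ`. -/
def IsBoundedBelow (c κ : ZFSet.{0}) : Prop := ∃ β ∈ κ, c ⊆ β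

/-- The poset `T¹(X)` of bounded 1-closed subsets of `X ⊆ κ`, relative to the universe `W`. -/
def T1In (W : Set ZFSet.{0}) (κ X : ZFSet.{0}) : ZFSet :=
  ZFSet.sep (fun c => c ∈ W ∧ IsBoundedBelow c κ ∧ IsOneClosedIn W c κ) (ZFSet.powerset X)

abbrev T1 (κ X : ZFSet.{0}) : ZFSet := T1In Set.univ κ X

/-- `c₁` end-extends `c₂` (i.e. `c₁ ≤ c₂` in `T¹(X)`). -/
def IsEndExtension (c₁ c₂ : ZFSet.{0}) : Prop :=
  c₂ ⊆ c₁ ∧ ∀ x ∈ c₁, x ∉ c₂ → ∀ y ∈ c₂, y ∈ x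

/-- The end-extension order on `T¹(X)`, as a ZF-coded relation. -/
def T1OrderIn (W : Set ZFSet.{0}) (κ X : ZFSet.{0}) : ZFSet :=
  ZFSet.pairSep (fun c₁ c₂ => IsEndExtension c₁ c₂) (T1In W κ X) (T1In W κ X)

abbrev T1Order (κ X : ZFSet.{0}) : ZFSet := T1OrderIn Set.univ κ X

end

noncomputable section

/-! ## The von Neumann hierarchy -/

/-- The von Neumann hierarchy `V_α` (for `α` an ordinal): `V_x = ⋃_{y ∈ x} 𝒫(V_y)`. -/
def Vrank : ZFSet.{0} → ZFSet.{0} :=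
  ZFSet.mem_wf.fix (fun x rec =>
    ⋃₀ (myImage (fun y => if h : y ∈ x then ZFSet.powerset (rec y h) else ∅) x))

/-! ## Π¹₁-indescribability -/

/-- The language with a membership relation and two unary predicates
(for the parameter `A` and a second-order variable `X`). -/
def memLang2 : Language where
  Functions := fun _ => Empty
  Relations := fun n => match n with | 1 => Fin 2 | 2 => Unit | _ => Empty

/-- The structure `(Vκ, ∈, A, B)`. -/
def str2 (Vk A B : ZFSet.{0}) : memLang2.Structure (↥Vk.toSet) where
  funMap := fun {_} f _ => f.elim
  RelMap := fun {n} =>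
    match n with
    | 1 => fun (r : Fin 2) v => if r = 0 then (((v 0 : Vk.toSet) : ZFSet) ∈ A)
                      else (((v 0 : Vk.toSet) : ZFSet) ∈ B)
    | 2 => fun _ v => ((v 0 : Vk.toSet) : ZFSet) ∈ ((v 1 : Vk.toSet) : ZFSet)
    | 0 => fun r _ => r.elim
    | (_+3) => fun r _ => r.elim

/-- `(Vk, ∈, A) ⊨ ∀X ψ(X)`: the Π¹₁-sentence with first-order matrix `ψ` holds in
`(Vk, ∈, A)`, where the second-order universal quantifier ranges over all subsets of `Vk`. -/
def SatisfiesPi11 (Vk A : ZFSet.{0}) (ψ : memLang2.Sentence) : Prop :=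
  ∀ B : ZFSet, B ⊆ Vk → @Sentence.Realize memLang2 _ (str2 Vk A B) ψ

/-! ## Products of 1-club shooting forcings, and lottery sums -/

/-- The ZF-coded set `[m, ω)` of natural numbers `≥ m`. -/
def omegaFrom (m : ℕ) : ZFSet.{0} :=
  ZFSet.sep (fun n => natZ m ⊆ n) ZFSet.omega

/-- The product `∏_{n ∈ [m, ω)} T¹(γ \ S^γ_n)`, computed relative to the universe `W`. -/
def prodT1In (W : Set ZFSet.{0}) (γ : ZFSet.{0}) (m : ℕ) : ZFSet :=
  ZFSet.sep
    (fun f => f ∈ W ∧ ZFSet.IsFunc (omegaFrom m) (ZFSet.powerset γ) f ∧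
      ∀ n : ℕ, m ≤ n → app f (natZ n) ∈ T1In W γ (γ \ SsetIn W γ n))
    (ZFSet.powerset (ZFSet.prod (omegaFrom m) (ZFSet.powerset γ)))

/-- The (pointwise end-extension) order on the product. -/
def prodT1Le (f g : ZFSet.{0}) (m : ℕ) : Prop :=
  ∀ n : ℕ, m ≤ n → IsEndExtension (app f (natZ n)) (app g (natZ n))

/-- The lottery sum `⊕_{m<ω} ∏_{n ∈ [m,ω)} T¹(γ \ S^γ_n)`, relative to the universe `W`;
`∅` serves as the top element `1`. -/
def lotterySumIn (W : Set ZFSet.{0}) (γ : ZFSet.{0}) : ZFSet :=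
  insert ∅ (ZFSet.sep
    (fun z => ∃ (m : ℕ) (f : ZFSet), z = ZFSet.pair (natZ m) f ∧ f ∈ prodT1In W γ m)
    (ZFSet.prod ZFSet.omega (ZFSet.powerset (ZFSet.prod ZFSet.omega (ZFSet.powerset γ)))))

/-- The order on the lottery sum: everything is below the top `∅`, and
`(m, f) ≤ (m', g)` iff `m = m'` and `f ≤ g` pointwise. -/
def lotteryLeIn (W : Set ZFSet.{0}) (γ : ZFSet.{0}) (a b : ZFSet.{0}) : Prop :=
  b = ∅ ∨ ∃ (m : ℕ) (f g : ZFSet), a = ZFSet.pair (natZ m) f ∧ b = ZFSet.pair (natZ m) g ∧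
    f ∈ prodT1In W γ m ∧ g ∈ prodT1In W γ m ∧ prodT1Le f g m

/-- The order on the lottery sum, as a ZF-coded relation. -/
def lotteryOrderIn (W : Set ZFSet.{0}) (γ : ZFSet.{0}) : ZFSet :=
  ZFSet.pairSep (fun a b => lotteryLeIn W γ a b) (lotterySumIn W γ) (lotterySumIn W γ)

/-! ## Easton-support iterations -/

/-- `p` is a ZF-coded function with domain `α`. -/
def IsFuncWithDomain (p α : ZFSet.{0}) : Prop := ∃ y : ZFSet, ZFSet.IsFunc α y p

/-- `p` (a condition of an iteration of length `α`) has Easton support: its support is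
bounded below every inaccessible `δ ≤ α` (stages where `p` takes the trivial value `∅`
are outside the support). -/
def HasEastonSupport (p α : ZFSet.{0}) : Prop :=
  ∀ δ : ZFSet, IsInaccessibleIn Set.univ δ → (δ ∈ α ∨ δ = α) →
    ∃ β ∈ δ, ∀ ξ ∈ δ, app p ξ ≠ ∅ → ξ ∈ β

/-- The restriction of a class filter `G` on an iteration to the first `β` stages. -/
def resFilter (G : Set ZFSet.{0}) (β : ZFSet.{0}) : Set ZFSet.{0} :=
  {q | ∃ p, p ∈ G ∧ q = restrictF p β}

/-- `⟨(P_α, Q̇_α) : α < κ⟩` is an Easton-support forcing iteration (described by the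
cumulative sequence of initial segments `Pseq α` with orders `Rseq α`, whose conditions
are functions with domain `α` and Easton support, coherent under restriction). -/
structure IsEastonIteration (κ : ZFSet.{0}) (Pseq Rseq : ZFSet.{0} → ZFSet.{0}) : Prop where
  isOrd : κ.IsOrdinal
  poset : ∀ α : ZFSet, α.IsOrdinal → (α ∈ κ ∨ α = κ) → IsPosetOn (Pseq α) (Rseq α)
  conds : ∀ α : ZFSet, α.IsOrdinal → (α ∈ κ ∨ α = κ) →
    ∀ p ∈ Pseq α, IsFuncWithDomain p α ∧ HasEastonSupport p α
  coherMem : ∀ α : ZFSet, α.IsOrdinal → (α ∈ κ ∨ α = κ) →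
    ∀ β ∈ α, ∀ p ∈ Pseq α, restrictF p β ∈ Pseq β
  coherLe : ∀ α : ZFSet, α.IsOrdinal → (α ∈ κ ∨ α = κ) →
    ∀ β ∈ α, ∀ p ∈ Pseq α, ∀ q ∈ Pseq α,
      zle (Rseq α) p q → zle (Rseq β) (restrictF p β) (restrictF q β)
  genRes : ∀ α : ZFSet, α.IsOrdinal → (α ∈ κ ∨ α = κ) → ∀ β ∈ α,
    ∀ G : Set ZFSet, IsGenericOverV (Pseq α) (Rseq α) G →
      IsGenericOverV (Pseq β) (Rseq β) (resFilter G β)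

/-- The main iteration of the paper: the Easton-support iteration which, at each stage
`γ < κ` that is Mahlo in `V`, forces with the lottery sum
`⊕_{m<ω} ∏_{n ∈ [m,ω)} T¹(γ \ S^γ_n)` as computed in `V^{P_γ}`, and trivially at
other stages.  The stage-`γ` behaviour is described by evaluating the stage-`γ`
components of conditions by a generic for the first `γ` stages. -/
structure IsMainIteration (κ : ZFSet.{0}) (Pseq Rseq : ZFSet.{0} → ZFSet.{0})
    extends IsEastonIteration κ Pseq Rseq : Prop where
  trivialStage : ∀ γ ∈ κ, ¬ IsMahloIn Set.univ γ → ∀ p ∈ Pseq κ, app p γ = ∅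
  lotteryStage : ∀ γ ∈ κ, IsMahloIn Set.univ γ →
    ∀ G : Set ZFSet, IsGenericOverV (Pseq γ) (Rseq γ) G →
      (∀ p ∈ Pseq (zsucc γ), zval G (app p γ) ∈ lotterySumIn (VofG G) γ) ∧
      (∀ q ∈ lotterySumIn (VofG G) γ, ∃ p ∈ Pseq (zsucc γ), zval G (app p γ) = q) ∧
      (∀ p ∈ Pseq (zsucc γ), ∀ q ∈ Pseq (zsucc γ), zle (Rseq (zsucc γ)) p q →
        zle (lotteryOrderIn (VofG G) γ) (zval G (app p γ)) (zval G (app q γ)))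

/-- An Easton-support iteration all of whose stages are (forced to be)
`α`-strategically closed. -/
structure IsStratClosedIteration (κ : ZFSet.{0}) (Pseq Rseq : ZFSet.{0} → ZFSet.{0})
    extends IsEastonIteration κ Pseq Rseq : Prop where
  stageClosed : ∀ α ∈ κ,
    ∀ G : Set ZFSet, IsGenericOverV (Pseq α) (Rseq α) G →
      ∃ Q R' : ZFSet, Q ∈ VofG G ∧ R' ∈ VofG G ∧ IsPosetOn Q R' ∧
        IsStratClosedIn (VofG G) Q R' α ∧
        (∀ p ∈ Pseq (zsucc α), zval G (app p α) ∈ Q) ∧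
        (∀ q ∈ Q, ∃ p ∈ Pseq (zsucc α), zval G (app p α) = q) ∧
        (∀ p ∈ Pseq (zsucc α), ∀ q ∈ Pseq (zsucc α), zle (Rseq (zsucc α)) p q →
          zle R' (zval G (app p α)) (zval G (app q α)))

end

noncomputable section

/-! ## Miscellaneous auxiliary notions used in the statements -/

/-- `M` is an elementary substructure of `(H, ∈)`. -/
def IsElemSubstructure (M H : ZFSet.{0}) : Prop :=
  M ⊆ H ∧ ∀ (n : ℕ) (φ : memLang.BoundedFormula Empty n) (v : Fin n → ZFSet),
    (∀ i, v i ∈ M) → (RealizeIn M φ v ↔ RealizeIn H φ v)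

/-- `H = H_{κ⁺}`: the sets whose transitive closure has size at most `κ`. -/
def IsHkappaPlus (κ H : ZFSet.{0}) : Prop :=
  ∀ x : ZFSet, x ∈ H ↔ ∃ t : ZFSet, x ⊆ t ∧ t.IsTransitive ∧ zcard t ≤ zcard κ

/-- `I` is a (proper) ideal on `lam`. -/
def IsIdealOn (lam I : ZFSet.{0}) : Prop :=
  (∀ X ∈ I, X ⊆ lam) ∧ ∅ ∈ I ∧ lam ∉ I ∧
  (∀ X ∈ I, ∀ Y : ZFSet, Y ⊆ X → Y ∈ I) ∧
  (∀ X ∈ I, ∀ Y ∈ I, X ∪ Y ∈ I)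

/-- `I` is `lam`-complete: it is closed under unions of fewer than `lam` members. -/
def IsLamCompleteIdeal (lam I : ZFSet.{0}) : Prop :=
  ∀ x : ZFSet, x ⊆ I → zcard x < zcard lam → (⋃₀ x : ZFSet) ∈ I

/-- `I` is a normal `lam`-complete (proper) ideal on `lam`: every regressive ZF-coded
function on an `I`-positive set is constant on an `I`-positive set. -/
def IsNormalIdealOn (lam I : ZFSet.{0}) : Prop :=
  IsIdealOn lam I ∧ IsLamCompleteIdeal lam I ∧
  ∀ S : ZFSet, S ⊆ lam → S ∉ I →
    ∀ f : ZFSet, ZFSet.IsFunc S lam f → (∀ α ∈ S, α ≠ ∅ → app f α ∈ α) →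
      ∃ β ∈ lam, ZFSet.sep (fun α => ZFSet.pair α β ∈ f) S ∉ I

/-- The pair `(W, V)` has the `δ`-approximation property. -/
def HasApproxProperty (W : Set ZFSet.{0}) (δ : ZFSet.{0}) : Prop :=
  ∀ A : ZFSet, (∀ a ∈ A, a ∈ W) →
    (∀ a : ZFSet, a ∈ W → zcard a < zcard δ → A ∩ a ∈ W) → A ∈ W

/-- The pair `(W, V)` has the `δ`-cover property. -/
def HasCoverProperty (W : Set ZFSet.{0}) (δ : ZFSet.{0}) : Prop :=
  ∀ A : ZFSet, (∀ a ∈ A, a ∈ W) → zcard A < zcard δ →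
    ∃ B : ZFSet, B ∈ W ∧ A ⊆ B ∧ zcard B < zcard δ

/-- The dense set `D_α = {c ∈ T¹(X) : sup c > α⁺}` (a set `c` has `sup c > α⁺` iff it
contains an ordinal of cardinality greater than `|α|`). -/
def DsetT1 (κ X α : ZFSet.{0}) : ZFSet :=
  ZFSet.sep (fun c => ∃ ξ ∈ c, zcard α < zcard ξ) (T1 κ X)

/-- The `1`-club `C = ⋃ {f(m) : f ∈ I_γ}` added by the product selected by the lottery
held at stage `γ` of the main iteration. -/
def stageClub (G : Set ZFSet.{0}) (γ : ZFSet.{0}) (m : ℕ) : ZFSet :=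
  ZFSet.sep (fun ξ => ∃ p, p ∈ G ∧ ∃ f : ZFSet,
    zval (resFilter G γ) (app p γ) = ZFSet.pair (natZ m) f ∧ ξ ∈ app f (natZ m)) γ

end



section Toolkit
open ZFSet

theorem h_ord_mem {x y : ZFSet} (hx : x.IsOrdinal) (h : y ∈ x) : y.IsOrdinal := by
  refine ⟨fun a ha b hb => hx.mem_trans' hb ha h, fun {a b c} hab hbc hcy => ?_⟩
  exact hx.mem_trans' hab hbc (hx.subset_of_mem h hcy)

theorem h_tri : ∀ x : ZFSet, x.IsOrdinal → ∀ y : ZFSet, y.IsOrdinal →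
    x ∈ y ∨ x = y ∨ y ∈ x := by
  intro x
  induction x using ZFSet.inductionOn with
  | _ x IHx =>
    intro hx y
    induction y using ZFSet.inductionOn with
    | _ y IHy =>
      intro hy
      by_cases hxy : x ∈ y
      · exact Or.inl hxy
      by_cases hyx : y ∈ x
      · exact Or.inr (Or.inr hyx)
      refine Or.inr (Or.inl (ZFSet.ext fun a => ⟨fun hax => ?_, fun hay => ?_⟩))
      · rcases IHx a hax (h_ord_mem hx hax) y hy with h | h | h
        · exact h
        · exact absurd (h ▸ hax) hyx
        · exact absurd (hx.mem_trans h hax) hyx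
      · rcases IHy a hay (h_ord_mem hy hay) with h | h | h
        · exact absurd (hy.mem_trans h hay) hxy
        · exact absurd (h ▸ hay) hxy
        · exact h

theorem h_mem_or_eq_of_subset {x y : ZFSet} (hx : x.IsOrdinal) (hy : y.IsOrdinal)
    (h : x ⊆ y) : x ∈ y ∨ x = y := by
  rcases h_tri x hx y hy with h' | h' | h'
  · exact Or.inl h'
  · exact Or.inr h'
  · exact absurd (h h') (ZFSet.mem_irrefl y)

/-- `x ≤ y < z → x < z` for ordinals. -/
theorem h_lt_of_le_of_lt {x y z : ZFSet} (hx : x.IsOrdinal) (hy : y.IsOrdinal)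
    (hz : z.IsOrdinal) (hxy : x ⊆ y) (hyz : y ∈ z) : x ∈ z := by
  rcases h_mem_or_eq_of_subset hx hy hxy with h | h
  · exact hz.mem_trans h hyz
  · exact h ▸ hyz

theorem h_zsucc_ord {x : ZFSet} (hx : x.IsOrdinal) : (zsucc x).IsOrdinal := by
  refine ⟨fun a ha b hb => ?_, fun {a b c} hab hbc hc => ?_⟩
  · rcases ZFSet.mem_insert_iff.1 ha with h | h
    · exact ZFSet.mem_insert_iff.2 (Or.inr (h ▸ hb))
    · exact ZFSet.mem_insert_iff.2 (Or.inr (hx.subset_of_mem h hb))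
  · rcases ZFSet.mem_insert_iff.1 hc with h | h
    · exact (h ▸ hx).isTransitive.mem_trans hab (h ▸ hbc)
    · exact hx.mem_trans' hab hbc h

theorem h_mem_zsucc_iff {x y : ZFSet} : y ∈ zsucc x ↔ y ∈ x ∨ y = x := by
  rw [zsucc, ZFSet.mem_insert_iff]; tauto

theorem h_self_mem_zsucc {x : ZFSet} : x ∈ zsucc x := ZFSet.mem_insert x x

theorem h_zsucc_subset {x y : ZFSet} (hy : y.IsOrdinal) (h : x ∈ y) : zsucc x ⊆ y := by
  intro z hz
  rcases h_mem_zsucc_iff.1 hz with h' | h'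
  · exact hy.mem_trans h' h
  · exact h' ▸ h

theorem h_sUnion_ord {x : ZFSet} (h : ∀ y ∈ x, ZFSet.IsOrdinal y) : (⋃₀ x : ZFSet).IsOrdinal := by
  refine ⟨fun a ha b hb => ?_, fun {a b c} hab hbc hc => ?_⟩
  · rcases ZFSet.mem_sUnion.1 ha with ⟨w, hw, haw⟩
    exact ZFSet.mem_sUnion.2 ⟨w, hw, (h w hw).isTransitive.mem_trans hb haw⟩
  · rcases ZFSet.mem_sUnion.1 hc with ⟨w, hw, hcw⟩
    exact (h_ord_mem (h w hw) hcw).isTransitive.mem_trans hab hbc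

theorem h_subset_sUnion {x y : ZFSet} (h : y ∈ x) : y ⊆ ⋃₀ x :=
  fun _ hz => ZFSet.mem_sUnion.2 ⟨y, h, hz⟩

theorem h_sUnion_least {x b : ZFSet} (h : ∀ y ∈ x, y ⊆ b) : (⋃₀ x : ZFSet) ⊆ b := by
  intro z hz
  rcases ZFSet.mem_sUnion.1 hz with ⟨w, hw, hzw⟩
  exact h w hw hzw

theorem h_sUnion_mono {x y : ZFSet} (h : x ⊆ y) : (⋃₀ x : ZFSet) ⊆ ⋃₀ y := by
  intro z hz
  rcases ZFSet.mem_sUnion.1 hz with ⟨w, hw, hzw⟩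
  exact ZFSet.mem_sUnion.2 ⟨w, h hw, hzw⟩

theorem h_eq_zsucc {x b : ZFSet} (hx : x.IsOrdinal) (hb : b ∈ x) (hnb : zsucc b ∉ x) :
    x = zsucc b := by
  rcases h_tri x hx (zsucc b) (h_zsucc_ord (h_ord_mem hx hb)) with h | h | h
  · rcases h_mem_zsucc_iff.1 h with h' | h'
    · exact absurd hb (ZFSet.mem_asymm h')
    · exact absurd (h' ▸ hb) (ZFSet.mem_irrefl x)
  · exact h
  · exact absurd h hnb

theorem h_ZSL {x : ZFSet} (hx : x.IsOrdinal) :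
    x = ∅ ∨ (∃ b, b ∈ x ∧ x = zsucc b) ∨ IsLimitZ x := by
  by_cases h0 : x = ∅
  · exact Or.inl h0
  by_cases hl : ∀ b ∈ x, zsucc b ∈ x
  · exact Or.inr (Or.inr ⟨hx, h0, hl⟩)
  · push_neg at hl
    obtain ⟨b, hb, hnb⟩ := hl
    exact Or.inr (Or.inl ⟨b, hb, h_eq_zsucc hx hb hnb⟩)

theorem h_iterSucc_ord {L : ZFSet} (hL : L.IsOrdinal) (n : ℕ) : (iterSucc L n).IsOrdinal := by
  induction n with
  | zero => exact hL
  | succ n ih => exact h_zsucc_ord ih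

theorem h_decomp : ∀ x : ZFSet, x.IsOrdinal →
    ∃ (L : ZFSet) (n : ℕ), (L = ∅ ∨ IsLimitZ L) ∧ x = iterSucc L n := by
  intro x
  induction x using ZFSet.inductionOn with
  | _ x IH =>
    intro hx
    rcases h_ZSL hx with h | ⟨b, hb, hxb⟩ | h
    · exact ⟨∅, 0, Or.inl rfl, h⟩
    · obtain ⟨L, n, hL, hbL⟩ := IH b hb (h_ord_mem hx hb)
      exact ⟨L, n + 1, hL, by rw [hxb, hbL]; rfl⟩
    · exact ⟨x, 0, Or.inr h, rfl⟩

theorem h_empty_mem {x : ZFSet} (hx : x.IsOrdinal) (h0 : x ≠ ∅) : ∅ ∈ x := by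
  rcases h_mem_or_eq_of_subset (by exact ⟨fun y hy => absurd hy (ZFSet.notMem_empty y),
    fun {a b c} _ hbc hc => absurd hc (ZFSet.notMem_empty c)⟩ : IsOrdinal ∅) hx
    (ZFSet.empty_subset x) with h | h
  · exact h
  · exact absurd h.symm h0

theorem h_limit_zsucc {x b : ZFSet} (hx : IsLimitZ x) (hb : b ∈ x) : zsucc b ∈ x :=
  hx.2.2 b hb

/-- between any `β < α` (limit) there is a turn of Player II. -/
theorem h_II_between {α β : ZFSet} (hα : IsLimitZ α) (hβ : β ∈ α) :
    ∃ β₂, β₂ ∈ α ∧ β ∈ β₂ ∧ IsIITurn β₂ := by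
  have hβo : β.IsOrdinal := h_ord_mem hα.1 hβ
  obtain ⟨L, n, hL, hs⟩ := h_decomp (zsucc β) (h_zsucc_ord hβo)
  rcases Nat.even_or_odd n with ⟨m, hm⟩ | ⟨m, hm⟩
  · refine ⟨zsucc (zsucc β), h_limit_zsucc hα (h_limit_zsucc hα hβ),
      h_mem_zsucc_iff.2 (Or.inl h_self_mem_zsucc), Or.inr ⟨L, m, hL, ?_⟩⟩
    have h1 : 2 * m + 1 = n + 1 := by omega
    rw [h1]
    show _ = zsucc (iterSucc L n)
    rw [← hs]
  · exact ⟨zsucc β, h_limit_zsucc hα hβ, h_self_mem_zsucc,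
      Or.inr ⟨L, m, hL, by rw [← hm]; exact hs⟩⟩

end Toolkit

section Toolkit2
open ZFSet

attribute [local instance] Classical.allZFSetDefinable

theorem h_app_eq {g z w : ZFSet} (hw : ZFSet.pair z w ∈ g)
    (hu : ∀ w', ZFSet.pair z w' ∈ g → w' = w) : app g z = w := by
  have hmem : w ∈ (⋃₀ (⋃₀ g) : ZFSet) := by
    have h1 : ({z, w} : ZFSet) ∈ ZFSet.pair z w := ZFSet.mem_pair.2 (Or.inr rfl)
    have h2 : w ∈ ({z, w} : ZFSet) := ZFSet.mem_pair.2 (Or.inr rfl)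
    exact ZFSet.mem_sUnion_of_mem h2 (ZFSet.mem_sUnion_of_mem h1 hw)
  have hsep : ZFSet.sep (fun y => ZFSet.pair z y ∈ g) (⋃₀ (⋃₀ g)) = ({w} : ZFSet) := by
    apply ZFSet.ext
    intro y
    rw [ZFSet.mem_sep, ZFSet.mem_singleton]
    constructor
    · rintro ⟨-, hy⟩; exact hu y hy
    · rintro rfl; exact ⟨hmem, hw⟩
  rw [app, hsep, ZFSet.sUnion_singleton]

theorem h_isFunc_app {d c g z : ZFSet} (hf : ZFSet.IsFunc d c g) (hz : z ∈ d) :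
    ZFSet.pair z (app g z) ∈ g ∧ app g z ∈ c := by
  obtain ⟨w, hw, hu⟩ := hf.2 z hz
  have := h_app_eq hw (fun w' hw' => hu w' hw')
  rw [this]
  exact ⟨hw, (ZFSet.pair_mem_prod.1 (hf.1 hw)).2⟩

theorem h_pair_mem_restrict {g β z c : ZFSet} :
    ZFSet.pair z c ∈ restrictF g β ↔ ZFSet.pair z c ∈ g ∧ z ∈ β := by
  rw [restrictF, ZFSet.mem_sep]
  constructor
  · rintro ⟨hg, ξ, hξ, y, hy⟩
    obtain ⟨rfl, rfl⟩ := ZFSet.pair_injective hy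
    exact ⟨hg, hξ⟩
  · rintro ⟨hg, hz⟩
    exact ⟨hg, z, hz, c, rfl⟩

theorem h_restrict_isFunc {α c g β : ZFSet} (hf : ZFSet.IsFunc α c g) (hβ : β ⊆ α) :
    ZFSet.IsFunc β c (restrictF g β) := by
  constructor
  · intro w hw
    rw [restrictF, ZFSet.mem_sep] at hw
    obtain ⟨hg, ξ, hξ, y, rfl⟩ := hw
    have := ZFSet.pair_mem_prod.1 (hf.1 hg)
    exact ZFSet.pair_mem_prod.2 ⟨hξ, this.2⟩
  · intro z hz
    obtain ⟨w, hw, hu⟩ := hf.2 z (hβ hz)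
    exact ⟨w, h_pair_mem_restrict.2 ⟨hw, hz⟩, fun w' hw' =>
      hu w' (h_pair_mem_restrict.1 hw').1⟩

theorem h_app_restrict {α c g β z : ZFSet} (hf : ZFSet.IsFunc α c g) (hβ : β ⊆ α)
    (hz : z ∈ β) : app (restrictF g β) z = app g z := by
  obtain ⟨w, hw, hu⟩ := hf.2 z (hβ hz)
  rw [h_app_eq (h_pair_mem_restrict.2 ⟨hw, hz⟩)
    (fun w' hw' => hu w' (h_pair_mem_restrict.1 hw').1), h_app_eq hw (fun w' hw' => hu w' hw')]

theorem h_restrict_restrict {g β β' : ZFSet} (h : β' ⊆ β) :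
    restrictF (restrictF g β) β' = restrictF g β' := by
  apply ZFSet.ext
  intro w
  simp only [restrictF, ZFSet.mem_sep]
  constructor
  · rintro ⟨⟨hg, -⟩, hp⟩; exact ⟨hg, hp⟩
  · rintro ⟨hg, ξ, hξ, y, rfl⟩
    exact ⟨⟨hg, ξ, h hξ, y, rfl⟩, ξ, hξ, y, rfl⟩

theorem h_mem_T1 {κ X c : ZFSet} :
    c ∈ T1 κ X ↔ c ⊆ X ∧ IsBoundedBelow c κ ∧ IsOneClosedIn Set.univ c κ := by
  rw [T1, T1In, ZFSet.mem_sep, ZFSet.mem_powerset]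
  constructor
  · rintro ⟨h1, -, h2, h3⟩; exact ⟨h1, h2, h3⟩
  · rintro ⟨h1, h2, h3⟩; exact ⟨h1, trivial, h2, h3⟩

theorem h_zle_T1 {κ X p q : ZFSet} :
    zle (T1Order κ X) p q ↔ p ∈ T1 κ X ∧ q ∈ T1 κ X ∧ IsEndExtension p q := by
  rw [zle, T1Order, T1OrderIn, ZFSet.mem_pairSep]
  constructor
  · rintro ⟨a, ha, b, hb, hab, hpq⟩
    obtain ⟨rfl, rfl⟩ := ZFSet.pair_injective hab
    exact ⟨ha, hb, hpq⟩
  · rintro ⟨hp, hq, hpq⟩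
    exact ⟨p, hp, q, hq, rfl, hpq⟩

theorem h_zle_refl {κ X p : ZFSet} (hp : p ∈ T1 κ X) : zle (T1Order κ X) p p :=
  h_zle_T1.2 ⟨hp, hp, fun _ h => h, fun x hx hnx y _ => absurd hx hnx⟩

theorem h_natZ_mem_natZ {n m : ℕ} (h : n < m) : natZ n ∈ natZ m := by
  induction m with
  | zero => omega
  | succ m ih =>
    rcases Nat.lt_succ_iff_lt_or_eq.1 h with h' | h'
    · exact ZFSet.mem_insert_iff.2 (Or.inr (ih h'))
    · subst h'; exact h_self_mem_zsucc

theorem h_natZ_inj {n m : ℕ} (h : natZ n = natZ m) : n = m := by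
  by_contra hne
  rcases Nat.lt_or_ge n m with h' | h'
  · exact ZFSet.mem_irrefl _ (h ▸ h_natZ_mem_natZ h')
  · have : m < n := by omega
    exact ZFSet.mem_irrefl _ (h ▸ h_natZ_mem_natZ this)

theorem h_natZ_mem_omega (n : ℕ) : natZ n ∈ ZFSet.omega := by
  induction n with
  | zero => exact ZFSet.omega_zero
  | succ n ih => exact ZFSet.omega_succ ih

theorem h_card_zsucc_mem {κ ξ : ZFSet} (hcard : IsCardinalZ κ) (hω : ZFSet.omega ∈ κ)
    (hξ : ξ ∈ κ) : zsucc ξ ∈ κ := by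
  have hκo : κ.IsOrdinal := hcard.1
  have hξo : ξ.IsOrdinal := h_ord_mem hκo hξ
  rcases h_tri (zsucc ξ) (h_zsucc_ord hξo) κ hκo with h | h | h
  · exact h
  · exfalso
    have hωξ : ZFSet.omega ⊆ ξ := by
      rcases h_mem_zsucc_iff.1 (h ▸ hω) with h' | h'
      · exact hξo.subset_of_mem h'
      · exact h' ▸ fun z hz => hz
    have hinf : Cardinal.aleph0 ≤ zcard ξ := by
      have hinj : Function.Injective (fun n : ULift.{1} ℕ => (⟨natZ n.down, (Iff.rfl : _ ∈ ξ.toSet ↔ _ ∈ ξ).2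
          (hωξ (h_natZ_mem_omega n.down))⟩ : ξ.toSet)) := by
        intro a b hab
        exact ULift.ext a b (h_natZ_inj (congrArg Subtype.val hab))
      have := Cardinal.mk_le_of_injective hinj
      simpa [Cardinal.mk_uLift, zcard] using this
    have h1 : zcard (zsucc ξ) = zcard ξ := by
      have : (zsucc ξ).toSet = insert ξ ξ.toSet := Set.ext fun z => ZFSet.mem_insert_iff
      rw [zcard, this, Cardinal.mk_insert (by
        show ξ ∉ ξ; exact ZFSet.mem_irrefl ξ)]
      exact Cardinal.add_one_eq hinf
    have h2 : zcard ξ < zcard κ := hcard.2 ξ hξ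
    rw [← h, h1] at h2
    exact lt_irrefl _ h2
  · rcases h_mem_zsucc_iff.1 h with h' | h'
    · exact absurd hξ (ZFSet.mem_asymm h')
    · exact absurd (h' ▸ hξ) (ZFSet.mem_irrefl _)

theorem h_inacc_limit {γ : ZFSet} (h : IsInaccessibleIn Set.univ γ) : IsLimitZ γ := by
  refine ⟨h.1.1.1, fun h0 => ZFSet.notMem_empty _ (h0 ▸ h.2.1), fun β hβ =>
    h_card_zsucc_mem h.1.1 h.2.1 hβ⟩

theorem h_union_ords {a b : ZFSet} (ha : a.IsOrdinal) (hb : b.IsOrdinal) :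
    a ∪ b = a ∨ a ∪ b = b := by
  rcases h_tri a ha b hb with h | h | h
  · refine Or.inr (ZFSet.ext fun z => ?_)
    rw [ZFSet.mem_union]
    exact ⟨fun hz => hz.elim (fun hz => hb.mem_trans hz h) id, Or.inr⟩
  · subst h; exact Or.inl (ZFSet.ext fun z => by rw [ZFSet.mem_union]; tauto)
  · refine Or.inl (ZFSet.ext fun z => ?_)
    rw [ZFSet.mem_union]
    exact ⟨fun hz => hz.elim id (fun hz => ha.mem_trans hz h), Or.inl⟩

/-- The set of ordinals of `γ` above `a` is club in a limit `γ`. -/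
theorem h_clubAbove {γ a : ZFSet} (hγ : IsLimitZ γ) (ha : a ∈ γ) :
    IsClubIn (ZFSet.sep (fun η => a ∈ η) γ) γ := by
  have hγo := hγ.1
  have hao : a.IsOrdinal := h_ord_mem hγo ha
  refine ⟨fun z hz => (ZFSet.mem_sep.1 hz).1, fun ζ hζ => ?_, fun β hβ hne hcl => ?_⟩
  · have hζo : ζ.IsOrdinal := h_ord_mem hγo hζ
    have hb : ζ ∪ a ∈ γ := by
      rcases h_union_ords hζo hao with h | h
      · rw [h]; exact hζ
      · rw [h]; exact ha
    have hbo : (ζ ∪ a).IsOrdinal := h_ord_mem hγo hb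
    refine ⟨zsucc (ζ ∪ a), ZFSet.mem_sep.2 ⟨h_limit_zsucc hγ hb, ?_⟩, Or.inl ?_⟩
    · rcases h_mem_or_eq_of_subset hao hbo (fun z hz => ZFSet.mem_union.2 (Or.inr hz)) with h | h
      · exact h_mem_zsucc_iff.2 (Or.inl h)
      · exact h_mem_zsucc_iff.2 (Or.inr h)
    · rcases h_mem_or_eq_of_subset hζo hbo (fun z hz => ZFSet.mem_union.2 (Or.inl hz)) with h | h
      · exact h_mem_zsucc_iff.2 (Or.inl h)
      · exact h_mem_zsucc_iff.2 (Or.inr h)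
  · obtain ⟨ξ0, hξ0⟩ := hne
    obtain ⟨η, hη, hηβ, -⟩ := hcl ξ0 hξ0
    have haη : a ∈ η := (ZFSet.mem_sep.1 hη).2
    exact ZFSet.mem_sep.2 ⟨hβ, (h_ord_mem hγo hβ).mem_trans haη hηβ⟩

theorem h_notStat {C S γ : ZFSet} (hclub : IsClubIn C γ)
    (hdisj : ∀ x, x ∈ S → x ∈ C → False) (hstat : IsStationaryIn Set.univ S γ) : False := by
  obtain ⟨x, hxS, hxC⟩ := hstat C trivial hclub
  exact hdisj x hxS hxC

end Toolkit2

noncomputable section Strategy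
open ZFSet

attribute [local instance] Classical.allZFSetDefinable

/-- Union of the conditions recorded in a position `x`. -/
def UxS (X x : ZFSet) : ZFSet :=
  ZFSet.sep (fun y => ∃ z c, ZFSet.pair z c ∈ x ∧ y ∈ c) X

/-- A "good" response of Player II at position `x`. -/
def GoodResp (κ X x q : ZFSet) : Prop :=
  ∃ ξ, ξ ∈ X ∧ (⋃₀ (UxS X x) : ZFSet) ∈ ξ ∧
    (∀ z c, ZFSet.pair z c ∈ x → ∀ y ∈ c, y ∈ ξ) ∧
    q = insert ξ (UxS X x) ∧ q ∈ T1 κ X ∧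
    (∀ z c, ZFSet.pair z c ∈ x → zle (T1Order κ X) q c)

/-- The strategy function. -/
def Fstrat (κ X x : ZFSet) : ZFSet :=
  if h : ∃ q, GoodResp κ X x q then h.choose else ∅

theorem Fstrat_good {κ X x : ZFSet} (h : ∃ q, GoodResp κ X x q) :
    GoodResp κ X x (Fstrat κ X x) := by
  rw [Fstrat, dif_pos h]
  exact h.choose_spec

def PosSet (κ X : ZFSet) : ZFSet := ZFSet.powerset (ZFSet.prod κ (ZFSet.powerset X))

/-- The graph of the strategy, as a ZF-set. -/
def Sstrat (κ X : ZFSet) : ZFSet :=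
  ZFSet.pairSep (fun a b => b = Fstrat κ X a) (PosSet κ X)
    (ZFSet.image (Fstrat κ X) (PosSet κ X))

theorem h_pair_mem_Sstrat {κ X a b : ZFSet} :
    ZFSet.pair a b ∈ Sstrat κ X ↔ a ∈ PosSet κ X ∧ b = Fstrat κ X a := by
  rw [Sstrat, ZFSet.mem_pairSep]
  constructor
  · rintro ⟨a', ha', b', hb', hab, heq⟩
    obtain ⟨rfl, rfl⟩ := ZFSet.pair_injective hab
    exact ⟨ha', heq⟩
  · rintro ⟨ha, rfl⟩
    exact ⟨a, ha, Fstrat κ X a, ZFSet.mem_image.2 ⟨a, ha, rfl⟩, rfl, rfl⟩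

theorem h_UxS_sub {X x : ZFSet} : UxS X x ⊆ X := by
  intro y hy
  simp only [UxS, ZFSet.mem_sep] at hy
  exact hy.1

/-- characterization of `UxS X (restrictF f β)` for a play `f`. -/
theorem h_Ux_char {κ X α f β y : ZFSet} (hf : ZFSet.IsFunc α (T1 κ X) f) (hβ : β ⊆ α) :
    y ∈ UxS X (restrictF f β) ↔ ∃ β' ∈ β, y ∈ app f β' := by
  rw [UxS, ZFSet.mem_sep]
  constructor
  · rintro ⟨-, z, c, hzc, hyc⟩
    obtain ⟨hzf, hzβ⟩ := h_pair_mem_restrict.1 hzc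
    obtain ⟨w, hw, hu⟩ := hf.2 z (hβ hzβ)
    refine ⟨z, hzβ, ?_⟩
    have hc : c = w := hu c hzf
    rw [h_app_eq hw (fun w' hw' => hu w' hw'), ← hc]
    exact hyc
  · rintro ⟨β', hβ', hy⟩
    obtain ⟨hpair, hmem⟩ := h_isFunc_app hf (hβ hβ')
    refine ⟨(h_mem_T1.1 hmem).1 hy, β', app f β', h_pair_mem_restrict.2 ⟨hpair, hβ'⟩, hy⟩

/-- A position of a play lies in `PosSet`. -/
theorem h_restrict_mem_PosSet {κ X α f β : ZFSet} (hf : ZFSet.IsFunc α (T1 κ X) f)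
    (hα : α ⊆ κ) : restrictF f β ∈ PosSet κ X := by
  rw [PosSet, ZFSet.mem_powerset]
  intro z hz
  have hzf : z ∈ f := (ZFSet.mem_sep.1 hz).1
  have := hf.1 hzf
  rw [ZFSet.mem_prod] at this
  obtain ⟨a, haα, b, hbP, rfl⟩ := this
  exact ZFSet.pair_mem_prod.2 ⟨hα haα, ZFSet.mem_powerset.2 (h_mem_T1.1 hbP).1⟩

/-- Restriction of a play is a play. -/
theorem h_restrict_desc {κ X α f β : ZFSet} (hα : α.IsOrdinal)
    (hdesc : IsDescPlay (T1 κ X) (T1Order κ X) α f) (hβ : β ∈ α) :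
    IsDescPlay (T1 κ X) (T1Order κ X) β (restrictF f β) := by
  have hβα : β ⊆ α := hα.subset_of_mem hβ
  refine ⟨h_restrict_isFunc hdesc.1 hβα, fun b hb g hg => ?_⟩
  rw [h_app_restrict hdesc.1 hβα hb, h_app_restrict hdesc.1 hβα
    ((h_ord_mem hα hβ).mem_trans hg hb)]
  exact hdesc.2 b (hβα hb) g hg

end Strategy

noncomputable section MainLemma
open ZFSet

attribute [local instance] Classical.allZFSetDefinable

/-- sup of the condition played at stage `β`. -/
def sigF (f β : ZFSet) : ZFSet := ⋃₀ (app f β)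

/-- union of the conditions played before stage `β`. -/
def UU (X f β : ZFSet) : ZFSet := UxS X (restrictF f β)

theorem h_main {κ X : ZFSet} (hκ : IsInaccessibleIn Set.univ κ) (hX : X ⊆ κ)
    (hunb : ∀ β ∈ κ, ∃ ξ ∈ X, β ∈ ξ) :
    ∀ α : ZFSet, α ∈ κ → ∀ f : ZFSet,
      IsDescPlay (T1 κ X) (T1Order κ X) α f →
      (∀ β ∈ α, IsIITurn β → ZFSet.pair (restrictF f β) (app f β) ∈ Sstrat κ X) →
      IsIITurn α → ∃ q, GoodResp κ X (restrictF f α) q := by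
  have hκord : κ.IsOrdinal := hκ.1.1.1
  intro α
  induction α using ZFSet.inductionOn with
  | _ α IH =>
    intro hακ f hdesc hfollow hIIα
    have hαord : α.IsOrdinal := h_ord_mem hκord hακ
    have hf : ZFSet.IsFunc α (T1 κ X) f := hdesc.1
    have hCond : ∀ β ∈ α, app f β ∈ T1 κ X := fun β hβ => (h_isFunc_app hf hβ).2
    have hCsubX : ∀ β ∈ α, app f β ⊆ X := fun β hβ => (h_mem_T1.1 (hCond β hβ)).1
    have hXord : ∀ y ∈ X, ZFSet.IsOrdinal y := fun y hy => h_ord_mem hκord (hX hy)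
    have hUchar : ∀ y, y ∈ UU X f α ↔ ∃ β' ∈ α, y ∈ app f β' := fun y =>
      h_Ux_char hf (fun z hz => hz)
    have hUX : UU X f α ⊆ X := h_UxS_sub
    have hUord : ∀ y ∈ UU X f α, ZFSet.IsOrdinal y := fun y hy => hXord y (hUX hy)
    have hchain : ∀ β ∈ α, ∀ β' ∈ β, IsEndExtension (app f β) (app f β') :=
      fun β hβ β' hβ' => (h_zle_T1.1 (hdesc.2 β hβ β' hβ')).2.2
    have hchain' : ∀ β ∈ α, ∀ β', β' ∈ β ∨ β' = β → app f β' ⊆ app f β := by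
      intro β hβ β' h
      rcases h with h | h
      · exact (hchain β hβ β' h).1
      · exact h ▸ fun z hz => hz
    have hσord : ∀ β ∈ α, (sigF f β).IsOrdinal := fun β hβ =>
      h_sUnion_ord (fun y hy => hXord y (hCsubX β hβ hy))
    have hσmono : ∀ β ∈ α, ∀ β', β' ∈ β ∨ β' = β → sigF f β' ⊆ sigF f β :=
      fun β hβ β' h => h_sUnion_mono (hchain' β hβ β' h)
    have hmemσ : ∀ β ∈ α, ∀ y ∈ app f β, y ⊆ sigF f β := fun β hβ y hy => h_subset_sUnion hy
    have hσκ : ∀ β ∈ α, sigF f β ∈ κ := by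
      intro β hβ
      obtain ⟨b, hbκ, hcb⟩ := (h_mem_T1.1 (hCond β hβ)).2.1
      have hbord : b.IsOrdinal := h_ord_mem hκord hbκ
      have hsb : sigF f β ⊆ b := h_sUnion_least (fun y hy => hbord.subset_of_mem (hcb hy))
      rcases h_mem_or_eq_of_subset (hσord β hβ) hbord hsb with h | h
      · exact hκord.mem_trans h hbκ
      · exact h ▸ hbκ
    have hTord : (⋃₀ UU X f α : ZFSet).IsOrdinal := h_sUnion_ord hUord
    have hTκ : (⋃₀ UU X f α : ZFSet) ∈ κ := by
      have hgf : ZFSet.IsFunc α κ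
          (ZFSet.sep (fun w => ∃ β ∈ α, w = ZFSet.pair β (sigF f β)) (ZFSet.prod α κ)) := by
        constructor
        · exact fun w hw => (ZFSet.mem_sep.1 hw).1
        · intro z hz
          refine ⟨sigF f z, ZFSet.mem_sep.2
            ⟨ZFSet.pair_mem_prod.2 ⟨hz, hσκ z hz⟩, z, hz, rfl⟩, ?_⟩
          intro w' hw'
          obtain ⟨-, β, hβ, heq⟩ := ZFSet.mem_sep.1 hw'
          obtain ⟨h1, h2⟩ := ZFSet.pair_injective heq
          rw [h2, ← h1]
      obtain ⟨δ, hδκ, hbd⟩ := hκ.1.2 α hακ _ trivial hgf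
      have hδord : δ.IsOrdinal := h_ord_mem hκord hδκ
      have hσδ : ∀ β ∈ α, sigF f β ∈ δ := fun β hβ => hbd β hβ (sigF f β)
        (ZFSet.mem_sep.2 ⟨ZFSet.pair_mem_prod.2 ⟨hβ, hσκ β hβ⟩, β, hβ, rfl⟩)
      have hTδ : (⋃₀ UU X f α : ZFSet) ⊆ δ := by
        apply h_sUnion_least
        intro y hy
        obtain ⟨β, hβ, hyc⟩ := (hUchar y).1 hy
        exact hδord.subset_of_mem (h_lt_of_le_of_lt (hUord y hy) (hσord β hβ) hδord
          (hmemσ β hβ y hyc) (hσδ β hβ))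
      rcases h_mem_or_eq_of_subset hTord hδord hTδ with h | h
      · exact hκord.mem_trans h hδκ
      · exact h ▸ hδκ
    obtain ⟨ξ, hξX, hTξ⟩ := hunb _ hTκ
    have hξκ : ξ ∈ κ := hX hξX
    have hξord : ξ.IsOrdinal := h_ord_mem hκord hξκ
    have habove : ∀ y ∈ UU X f α, y ∈ ξ := fun y hy =>
      h_lt_of_le_of_lt (hUord y hy) hTord hξord (h_subset_sUnion hy) hTξ
    have hmemq : ∀ y, y ∈ insert ξ (UU X f α) ↔ y = ξ ∨ y ∈ UU X f α :=
      fun y => ZFSet.mem_insert_iff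
    have hqsubX : insert ξ (UU X f α) ⊆ X := by
      intro y hy
      rcases (hmemq y).1 hy with rfl | hy'
      · exact hξX
      · exact hUX hy'
    have hcβsubU : ∀ β ∈ α, app f β ⊆ UU X f α := fun β hβ y hy => (hUchar y).2 ⟨β, hβ, hy⟩
    -- data at earlier turns of Player II
    have hIIdata : ∀ β ∈ α, IsIITurn β → ∃ ξβ, ξβ ∈ X ∧
        (⋃₀ UU X f β : ZFSet) ∈ ξβ ∧
        (∀ z c, ZFSet.pair z c ∈ restrictF f β → ∀ y ∈ c, y ∈ ξβ) ∧
        app f β = insert ξβ (UU X f β) := by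
      intro β hβ hIIβ
      have hβκ : β ∈ κ := hκord.mem_trans hβ hακ
      have hβord : β.IsOrdinal := h_ord_mem hαord hβ
      have hβsub : β ⊆ α := hαord.subset_of_mem hβ
      have hdesc' : IsDescPlay (T1 κ X) (T1Order κ X) β (restrictF f β) :=
        h_restrict_desc hαord hdesc hβ
      have hfollow' : ∀ β'' ∈ β, IsIITurn β'' →
          ZFSet.pair (restrictF (restrictF f β) β'') (app (restrictF f β) β'') ∈ Sstrat κ X := by
        intro β'' hβ'' hII''
        rw [h_restrict_restrict (hβord.subset_of_mem hβ''), h_app_restrict hf hβsub hβ'']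
        exact hfollow β'' (hβsub hβ'') hII''
      have hex := IH β hβ hβκ (restrictF f β) hdesc' hfollow' hIIβ
      rw [h_restrict_restrict (fun z hz => hz)] at hex
      have hgood := Fstrat_good hex
      have hfl := (h_pair_mem_Sstrat.1 (hfollow β hβ hIIβ)).2
      rw [← hfl] at hgood
      obtain ⟨ξβ, h1, h2, h3, h4, -, -⟩ := hgood
      exact ⟨ξβ, h1, h2, h3, h4⟩
    -- 1-closedness of the response
    have honecl : IsOneClosedIn Set.univ (insert ξ (UU X f α)) κ := by
      intro γ hγκ hγinacc hγstat
      have hγord : γ.IsOrdinal := h_ord_mem hκord hγκ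
      have hγlim : IsLimitZ γ := h_inacc_limit hγinacc
      rcases h_tri ξ hξord γ hγord with hξγ | hξγ | hξγ
      · exfalso
        refine h_notStat (h_clubAbove hγlim hξγ) ?_ hγstat
        intro x' hx' hx'C
        have hξx' : ξ ∈ x' := (ZFSet.mem_sep.1 hx'C).2
        rcases (hmemq x').1 (ZFSet.mem_inter.1 hx').1 with rfl | hx'U
        · exact ZFSet.mem_irrefl _ hξx'
        · exact ZFSet.mem_asymm (habove x' hx'U) hξx'
      · exact (hmemq γ).2 (Or.inl hξγ.symm)
      · have hξnγ : ξ ∉ γ := ZFSet.mem_asymm hξγ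
        have hqγU : insert ξ (UU X f α) ∩ γ = UU X f α ∩ γ := by
          apply ZFSet.ext; intro z
          rw [ZFSet.mem_inter, ZFSet.mem_inter]
          constructor
          · rintro ⟨hzq, hzγ⟩
            rcases (hmemq z).1 hzq with rfl | hzU
            · exact absurd hzγ hξnγ
            · exact ⟨hzU, hzγ⟩
          · rintro ⟨hzU, hzγ⟩
            exact ⟨(hmemq z).2 (Or.inr hzU), hzγ⟩
        have hfinish : ∀ β ∈ α, UU X f α ∩ γ = app f β ∩ γ → γ ∈ insert ξ (UU X f α) := by
          intro β hβ hUβ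
          have hstat' : IsStationaryIn Set.univ (app f β ∩ γ) γ := by
            rw [← hUβ, ← hqγU]; exact hγstat
          have hγc := (h_mem_T1.1 (hCond β hβ)).2.2 γ hγκ hγinacc hstat'
          exact (hmemq γ).2 (Or.inr (hcβsubU β hβ hγc))
        rcases hIIα with hαlim | ⟨L, n, hL, hform⟩
        swap
        · -- α is a successor
          have hform' : α = zsucc (iterSucc L (2 * n)) := hform
          have hδ0α : iterSucc L (2 * n) ∈ α := by rw [hform']; exact h_self_mem_zsucc
          have hUeq : UU X f α = app f (iterSucc L (2 * n)) := by
            apply ZFSet.ext; intro y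
            rw [hUchar y]
            constructor
            · rintro ⟨β', hβ', hy⟩
              have hβ'm : β' ∈ iterSucc L (2 * n) ∨ β' = iterSucc L (2 * n) := by
                rw [hform'] at hβ'
                exact h_mem_zsucc_iff.1 hβ'
              exact hchain' _ hδ0α β' hβ'm hy
            · intro hy; exact ⟨_, hδ0α, hy⟩
          apply hfinish _ hδ0α
          rw [hUeq]
        · -- α is a limit
          by_cases hA : ∃ β ∈ α, ∃ y ∈ app f β, y ∉ γ
          · obtain ⟨β, hβ, y, hyc, hyγ⟩ := hA
            apply hfinish β hβ
            apply ZFSet.ext; intro z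
            rw [ZFSet.mem_inter, ZFSet.mem_inter]
            constructor
            · rintro ⟨hzU, hzγ⟩
              obtain ⟨β', hβ', hz⟩ := (hUchar z).1 hzU
              refine ⟨?_, hzγ⟩
              rcases h_tri β' (h_ord_mem hαord hβ') β (h_ord_mem hαord hβ) with h | h | h
              · exact hchain' β hβ β' (Or.inl h) hz
              · exact hchain' β hβ β' (Or.inr h) hz
              · by_cases hzc : z ∈ app f β
                · exact hzc
                · exfalso
                  have hyz : y ∈ z := (hchain β' hβ' β h).2 z hz hzc y hyc
                  have hzord : z.IsOrdinal := hXord z (hCsubX β' hβ' hz)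
                  rcases h_tri y (hXord y (hCsubX β hβ hyc)) γ hγord with h' | h' | h'
                  · exact hyγ h'
                  · exact ZFSet.mem_asymm hzγ (h' ▸ hyz)
                  · exact ZFSet.mem_asymm hzγ (hzord.mem_trans h' hyz)
            · rintro ⟨hzc, hzγ⟩
              exact ⟨hcβsubU β hβ hzc, hzγ⟩
          · push_neg at hA
            have hUγ : UU X f α ⊆ γ := by
              intro y hy
              obtain ⟨β, hβ, hyc⟩ := (hUchar y).1 hy
              exact hA β hβ y hyc
            have hTγ : (⋃₀ UU X f α : ZFSet) ⊆ γ :=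
              h_sUnion_least (fun y hy => hγord.subset_of_mem (hUγ hy))
            have hUγU : UU X f α ∩ γ = UU X f α := by
              apply ZFSet.ext; intro z
              rw [ZFSet.mem_inter]
              exact ⟨fun h => h.1, fun h => ⟨h, hUγ h⟩⟩
            rcases h_mem_or_eq_of_subset hTord hγord hTγ with hTmem | hTeq
            · exfalso
              refine h_notStat (h_clubAbove hγlim hTmem) ?_ hγstat
              intro x' hx' hx'C
              have hTx' : (⋃₀ UU X f α : ZFSet) ∈ x' := (ZFSet.mem_sep.1 hx'C).2
              have hx'U : x' ∈ UU X f α := by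
                have hx'' := ZFSet.mem_inter.1 hx'
                rcases (hmemq x').1 hx''.1 with rfl | h
                · exact absurd hx''.2 hξnγ
                · exact h
              exact ZFSet.mem_irrefl _ (h_subset_sUnion hx'U hTx')
            · -- hard case : γ = sup of the union
              exfalso
              have hσγ : ∀ β ∈ α, sigF f β ∈ γ := by
                intro β hβ
                obtain ⟨β₂, hβ₂α, hββ₂, hII₂⟩ := h_II_between hαlim hβ
                obtain ⟨ξ₂, hξ₂X, -, hcl₂, heq₂⟩ := hIIdata β₂ hβ₂α hII₂
                have hξ₂ord : ξ₂.IsOrdinal := hXord ξ₂ hξ₂X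
                have hσsub : sigF f β ⊆ ξ₂ := h_sUnion_least (fun y hy =>
                  hξ₂ord.subset_of_mem (hcl₂ β (app f β) (h_pair_mem_restrict.2
                    ⟨(h_isFunc_app hf hβ).1, hββ₂⟩) y hy))
                have hξ₂γ : ξ₂ ∈ γ := hUγ ((hUchar ξ₂).2
                  ⟨β₂, hβ₂α, by rw [heq₂]; exact ZFSet.mem_insert _ _⟩)
                exact h_lt_of_le_of_lt (hσord β hβ) hξ₂ord hγord hσsub hξ₂γ
              by_cases hcof : ∀ β ∈ α, ∃ β', β' ∈ α ∧ β ∈ β' ∧ IsLimitZ β'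
              · -- limits are cofinal : build a club disjoint from the union
                have hmemU2 : ∀ β ∈ α, IsLimitZ β → ∀ β'' ∈ β, ∀ y,
                    y ∈ app f β'' → y ∈ (⋃₀ UU X f β : ZFSet) := by
                  intro β hβ hβlim β'' hβ'' y hy
                  obtain ⟨β₂, hβ₂β, hβ''₂, hII₂⟩ := h_II_between hβlim hβ''
                  have hβ₂α : β₂ ∈ α := hαord.mem_trans hβ₂β hβ
                  obtain ⟨ξ₂, hξ₂X, -, hcl₂, heq₂⟩ := hIIdata β₂ hβ₂α hII₂
                  have hyξ₂ : y ∈ ξ₂ := hcl₂ β'' (app f β'') (h_pair_mem_restrict.2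
                    ⟨(h_isFunc_app hf (hαord.mem_trans hβ'' hβ)).1, hβ''₂⟩) y hy
                  have hξ₂mem : ξ₂ ∈ app f β₂ := by rw [heq₂]; exact ZFSet.mem_insert _ _
                  exact ZFSet.mem_sUnion.2 ⟨ξ₂, (h_Ux_char hf (hαord.subset_of_mem hβ)).2
                    ⟨β₂, hβ₂β, hξ₂mem⟩, hyξ₂⟩
                have hηord : ∀ β, (⋃₀ UU X f β : ZFSet).IsOrdinal := fun β =>
                  h_sUnion_ord (fun y hy => hXord y (h_UxS_sub hy))
                have hσmemη : ∀ β ∈ α, IsLimitZ β → ∀ β'' ∈ β,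
                    sigF f β'' ∈ (⋃₀ UU X f β : ZFSet) := by
                  intro β hβ hβlim β'' hβ''
                  obtain ⟨β₂, hβ₂β, hs₂, hII₂⟩ := h_II_between hβlim (h_limit_zsucc hβlim hβ'')
                  have hβ₂α : β₂ ∈ α := hαord.mem_trans hβ₂β hβ
                  have hβ''₂ : β'' ∈ β₂ := (h_ord_mem hαord hβ₂α).mem_trans h_self_mem_zsucc hs₂
                  obtain ⟨ξ₂, hξ₂X, -, hcl₂, heq₂⟩ := hIIdata β₂ hβ₂α hII₂
                  have hβ''α : β'' ∈ α := hαord.mem_trans hβ'' hβ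
                  have hσsub : sigF f β'' ⊆ ξ₂ := h_sUnion_least (fun y hy =>
                    (hXord ξ₂ hξ₂X).subset_of_mem (hcl₂ β'' (app f β'')
                      (h_pair_mem_restrict.2 ⟨(h_isFunc_app hf hβ''α).1, hβ''₂⟩) y hy))
                  have hξ₂η : ξ₂ ∈ (⋃₀ UU X f β : ZFSet) := hmemU2 β hβ hβlim β₂ hβ₂β ξ₂
                    (by rw [heq₂]; exact ZFSet.mem_insert _ _)
                  exact h_lt_of_le_of_lt (hσord β'' hβ''α) (hXord ξ₂ hξ₂X) (hηord β) hσsub hξ₂η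
                have hmemC : ∀ η, η ∈ ZFSet.sep (fun η => (∃ β, β ∈ α ∧ sigF f β ∈ η) ∧
                    ∀ ζ ∈ η, ∃ β, β ∈ α ∧ sigF f β ∈ η ∧ ζ ∈ sigF f β) γ ↔
                    η ∈ γ ∧ ((∃ β, β ∈ α ∧ sigF f β ∈ η) ∧
                    ∀ ζ ∈ η, ∃ β, β ∈ α ∧ sigF f β ∈ η ∧ ζ ∈ sigF f β) :=
                  fun η => ZFSet.mem_sep
                have hηC : ∀ β ∈ α, IsLimitZ β → (⋃₀ UU X f β : ZFSet) ∈
                    ZFSet.sep (fun η => (∃ β, β ∈ α ∧ sigF f β ∈ η) ∧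
                    ∀ ζ ∈ η, ∃ β, β ∈ α ∧ sigF f β ∈ η ∧ ζ ∈ sigF f β) γ := by
                  intro β hβ hβlim
                  have h0β : (∅ : ZFSet) ∈ β := h_empty_mem hβlim.1 hβlim.2.1
                  obtain ⟨ξβ, hξβX, hsupβ, -, heqβ⟩ := hIIdata β hβ (Or.inl hβlim)
                  have hξβU : ξβ ∈ UU X f α := (hUchar ξβ).2
                    ⟨β, hβ, by rw [heqβ]; exact ZFSet.mem_insert _ _⟩
                  have hηγ : (⋃₀ UU X f β : ZFSet) ∈ γ := hγord.mem_trans hsupβ (hUγ hξβU)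
                  have hclause2 : ∀ ζ' ∈ (⋃₀ UU X f β : ZFSet), ∃ b, b ∈ α ∧
                      sigF f b ∈ (⋃₀ UU X f β : ZFSet) ∧ ζ' ∈ sigF f b := by
                    intro ζ' hζ'
                    obtain ⟨y', hy'u, hζ'y⟩ := ZFSet.mem_sUnion.1 hζ'
                    obtain ⟨β'', hβ''β, hy'c⟩ :=
                      (h_Ux_char hf (hαord.subset_of_mem hβ)).1 hy'u
                    have hβ''α : β'' ∈ α := hαord.mem_trans hβ''β hβ
                    exact ⟨β'', hβ''α, hσmemη β hβ hβlim β'' hβ''β,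
                      hmemσ β'' hβ''α y' hy'c hζ'y⟩
                  have honeβ : zsucc ∅ ∈ β := h_limit_zsucc hβlim h0β
                  have hIIone : IsIITurn (zsucc ∅) := Or.inr ⟨∅, 0, Or.inl rfl, rfl⟩
                  have honeα : zsucc ∅ ∈ α := hαord.mem_trans honeβ hβ
                  obtain ⟨ξ1, hξ1X, hsup1, -, heq1⟩ := hIIdata (zsucc ∅) honeα hIIone
                  have hξ1mem : ξ1 ∈ app f (zsucc ∅) := by
                    rw [heq1]; exact ZFSet.mem_insert _ _
                  have hζ1 : (⋃₀ UU X f (zsucc ∅) : ZFSet) ∈ (⋃₀ UU X f β : ZFSet) :=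
                    ZFSet.mem_sUnion.2 ⟨ξ1, (h_Ux_char hf (hαord.subset_of_mem hβ)).2
                      ⟨zsucc ∅, honeβ, hξ1mem⟩, hsup1⟩
                  obtain ⟨b, hbα, hσb, -⟩ := hclause2 _ hζ1
                  exact (hmemC _).2 ⟨hηγ, ⟨b, hbα, hσb⟩, hclause2⟩
                have hCclub : IsClubIn (ZFSet.sep (fun η => (∃ β, β ∈ α ∧ sigF f β ∈ η) ∧
                    ∀ ζ ∈ η, ∃ β, β ∈ α ∧ sigF f β ∈ η ∧ ζ ∈ sigF f β) γ) γ := by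
                  refine ⟨fun z hz => (ZFSet.mem_sep.1 hz).1, ?_, ?_⟩
                  · intro ζ hζ
                    have hζT : ζ ∈ (⋃₀ UU X f α : ZFSet) := by rw [hTeq]; exact hζ
                    obtain ⟨y, hyU, hζy⟩ := ZFSet.mem_sUnion.1 hζT
                    obtain ⟨β', hβ'α, hyc⟩ := (hUchar y).1 hyU
                    obtain ⟨β, hβα, hβ'β, hβlim⟩ := hcof β' hβ'α
                    exact ⟨⋃₀ UU X f β, hηC β hβα hβlim, Or.inl ((hηord β).mem_trans hζy
                      (hmemU2 β hβα hβlim β' hβ'β y hyc))⟩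
                  · intro b hbγ hbne hcl
                    have hbord : b.IsOrdinal := h_ord_mem hγord hbγ
                    obtain ⟨ζ0, hζ0⟩ := hbne
                    obtain ⟨η', hη'C, hη'b, -⟩ := hcl ζ0 hζ0
                    obtain ⟨-, ⟨b1, hb1α, hσ1⟩, -⟩ := (hmemC η').1 hη'C
                    refine (hmemC b).2 ⟨hbγ, ⟨b1, hb1α, hbord.mem_trans hσ1 hη'b⟩, ?_⟩
                    intro ζ hζb
                    obtain ⟨η'', hη''C, hη''b, hζη''⟩ := hcl ζ hζb
                    obtain ⟨-, -, hclause⟩ := (hmemC η'').1 hη''C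
                    obtain ⟨b2, hb2α, hσ2, hζσ2⟩ := hclause ζ hζη''
                    exact ⟨b2, hb2α, hbord.mem_trans hσ2 hη''b, hζσ2⟩
                have hKey : ∀ η, η ∈ ZFSet.sep (fun η => (∃ β, β ∈ α ∧ sigF f β ∈ η) ∧
                    ∀ ζ ∈ η, ∃ β, β ∈ α ∧ sigF f β ∈ η ∧ ζ ∈ sigF f β) γ →
                    η ∈ UU X f α → False := by
                  intro η hηC hηU
                  obtain ⟨hηγ, ⟨βw, hβwα, hσw⟩, hclause⟩ := (hmemC η).1 hηC
                  have hηo : η.IsOrdinal := h_ord_mem hγord hηγ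
                  have hbdd : ∃ β₁, β₁ ∈ α ∧ ∀ β'' ∈ α, sigF f β'' ∈ η → β'' ∈ β₁ := by
                    by_contra hcon
                    push_neg at hcon
                    have hall : ∀ β₁ ∈ α, sigF f β₁ ∈ η := by
                      intro β₁ hβ₁
                      obtain ⟨β'', hβ''α, hσ'', hne⟩ := hcon β₁ hβ₁
                      have hm : β₁ ∈ β'' ∨ β₁ = β'' := by
                        rcases h_tri β₁ (h_ord_mem hαord hβ₁) β''
                          (h_ord_mem hαord hβ''α) with h | h | h
                        · exact Or.inl h
                        · exact Or.inr h
                        · exact absurd h hne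
                      exact h_lt_of_le_of_lt (hσord β₁ hβ₁) (hσord β'' hβ''α) hηo
                        (hσmono β'' hβ''α β₁ hm) hσ''
                    have hUη : UU X f α ⊆ η := by
                      intro y hy
                      obtain ⟨β, hβ, hyc⟩ := (hUchar y).1 hy
                      exact h_lt_of_le_of_lt (hUord y hy) (hσord β hβ) hηo
                        (hmemσ β hβ y hyc) (hall β hβ)
                    have hγη : γ ⊆ η := by
                      rw [← hTeq]
                      exact h_sUnion_least (fun y hy => hηo.subset_of_mem (hUη hy))
                    exact ZFSet.mem_irrefl η (hγη hηγ)
                  obtain ⟨β₁, hβ₁α, hβ₁bd⟩ := hbdd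
                  have hB'ne : ZFSet.sep (fun b => sigF f b ∉ η) α ≠ ∅ := by
                    obtain ⟨β₂, hβ₂α, hβ₁₂, -⟩ := h_II_between hαlim hβ₁α
                    intro h0
                    have hβ₂B' : β₂ ∈ ZFSet.sep (fun b => sigF f b ∉ η) α :=
                      ZFSet.mem_sep.2 ⟨hβ₂α, fun hσ₂ =>
                        ZFSet.mem_asymm hβ₁₂ (hβ₁bd β₂ hβ₂α hσ₂)⟩
                    rw [h0] at hβ₂B'
                    exact ZFSet.notMem_empty _ hβ₂B'
                  obtain ⟨βs, hβsB', hβsmin⟩ := ZFSet.regularity _ hB'ne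
                  obtain ⟨hβsα, hσβs⟩ := ZFSet.mem_sep.1 hβsB'
                  have hβsord : βs.IsOrdinal := h_ord_mem hαord hβsα
                  have hmin : ∀ b ∈ βs, sigF f b ∈ η := by
                    intro b hb
                    by_contra hbn
                    have hbB' : b ∈ ZFSet.sep (fun b => sigF f b ∉ η) α ∩ βs :=
                      ZFSet.mem_inter.2 ⟨ZFSet.mem_sep.2 ⟨hαord.mem_trans hb hβsα, hbn⟩, hb⟩
                    rw [hβsmin] at hbB'
                    exact ZFSet.notMem_empty _ hbB'
                  have hBless : ∀ β'' ∈ α, sigF f β'' ∈ η → β'' ∈ βs := by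
                    intro β'' hβ''α hσ''
                    rcases h_tri β'' (h_ord_mem hαord hβ''α) βs hβsord with h | h | h
                    · exact h
                    · exact absurd (h ▸ hσ'') hσβs
                    · exact absurd (h_lt_of_le_of_lt (hσord βs hβsα) (hσord β'' hβ''α) hηo
                        (hσmono β'' hβ''α βs (Or.inl h)) hσ'') hσβs
                  have hβslim : IsLimitZ βs := by
                    rcases h_ZSL hβsord with h0 | ⟨b, hb, hsb⟩ | h
                    · exfalso
                      have hw := hBless βw hβwα hσw
                      rw [h0] at hw
                      exact ZFSet.notMem_empty _ hw
                    · exfalso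
                      have hσbη : sigF f b ∈ η := hmin b hb
                      have hηsub : η ⊆ sigF f b := by
                        intro ζ hζ
                        obtain ⟨β'', hβ''α, hσ''η, hζσ''⟩ := hclause ζ hζ
                        have hβ''βs : β'' ∈ βs := hBless β'' hβ''α hσ''η
                        have hm : β'' ∈ b ∨ β'' = b := by
                          rw [hsb] at hβ''βs
                          exact h_mem_zsucc_iff.1 hβ''βs
                        exact hσmono b (hαord.mem_trans hb hβsα) β'' hm hζσ''
                      exact ZFSet.mem_irrefl _ (hηsub hσbη)
                    · exact h
                  obtain ⟨ξs, hξsX, hsups, hcls, heqs⟩ := hIIdata βs hβsα (Or.inl hβslim)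
                  have hηeq : η = (⋃₀ UU X f βs : ZFSet) := by
                    apply ZFSet.ext; intro ζ
                    constructor
                    · intro hζ
                      obtain ⟨β'', hβ''α, hσ''η, hζσ''⟩ := hclause ζ hζ
                      have hβ''βs : β'' ∈ βs := hBless β'' hβ''α hσ''η
                      obtain ⟨y'', hy''c, hζy''⟩ := ZFSet.mem_sUnion.1 hζσ''
                      exact ZFSet.mem_sUnion.2 ⟨y'',
                        (h_Ux_char hf (hαord.subset_of_mem hβsα)).2
                          ⟨β'', hβ''βs, hy''c⟩, hζy''⟩
                    · intro hζ
                      obtain ⟨y'', hy''u, hζy''⟩ := ZFSet.mem_sUnion.1 hζ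
                      obtain ⟨β'', hβ''βs, hy''c⟩ :=
                        (h_Ux_char hf (hαord.subset_of_mem hβsα)).1 hy''u
                      have hβ''α : β'' ∈ α := hαord.mem_trans hβ''βs hβsα
                      exact hηo.mem_trans (hmemσ β'' hβ''α y'' hy''c hζy'') (hmin β'' hβ''βs)
                  have hcase1 : ∀ b, b ∈ βs → η ∈ app f b → False := by
                    intro b hb hηc
                    obtain ⟨β₂, hβ₂βs, hbβ₂, hII₂⟩ := h_II_between hβslim hb
                    have hβ₂α : β₂ ∈ α := hαord.mem_trans hβ₂βs hβsα
                    obtain ⟨ξ₂, hξ₂X, -, hcl₂, heq₂⟩ := hIIdata β₂ hβ₂α hII₂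
                    have hηξ₂ : η ∈ ξ₂ := hcl₂ b (app f b) (h_pair_mem_restrict.2
                      ⟨(h_isFunc_app hf (hαord.mem_trans hb hβsα)).1, hbβ₂⟩) η hηc
                    have hξ₂mem : ξ₂ ∈ UU X f βs :=
                      (h_Ux_char hf (hαord.subset_of_mem hβsα)).2
                        ⟨β₂, hβ₂βs, by rw [heq₂]; exact ZFSet.mem_insert _ _⟩
                    have hsubη : ξ₂ ⊆ η := by rw [hηeq]; exact h_subset_sUnion hξ₂mem
                    exact ZFSet.mem_irrefl η (hsubη hηξ₂)
                  have hcaseβs : η ∈ app f βs → False := by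
                    intro hηc'
                    rw [heqs] at hηc'
                    rcases ZFSet.mem_insert_iff.1 hηc' with h | h
                    · rw [hηeq] at h
                      exact ZFSet.mem_irrefl _ (h ▸ hsups)
                    · obtain ⟨b', hb'βs, hηc''⟩ :=
                        (h_Ux_char hf (hαord.subset_of_mem hβsα)).1 h
                      exact hcase1 b' hb'βs hηc''
                  obtain ⟨b, hbα, hηc⟩ := (hUchar η).1 hηU
                  rcases h_tri b (h_ord_mem hαord hbα) βs hβsord with h | h | h
                  · exact hcase1 b h hηc
                  · exact hcaseβs (h ▸ hηc)
                  · by_cases hηβs : η ∈ app f βs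
                    · exact hcaseβs hηβs
                    · have hξsη : ξs ∈ η := (hchain b hbα βs h).2 η hηc hηβs ξs
                        (by rw [heqs]; exact ZFSet.mem_insert _ _)
                      rw [hηeq] at hξsη
                      exact ZFSet.mem_asymm hξsη hsups
                refine h_notStat hCclub (fun x' hx'S hx'C => ?_) hγstat
                have hx'U : x' ∈ UU X f α := by rw [hqγU, hUγU] at hx'S; exact hx'S
                exact hKey x' hx'C hx'U
              · -- limits are not cofinal : cofinality ω, contradicting regularity
                push_neg at hcof
                obtain ⟨β₀, hβ₀α, hnolim⟩ := hcof
                have hβ₀ord : β₀.IsOrdinal := h_ord_mem hαord hβ₀α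
                have hstage : ∀ n : ℕ, iterSucc β₀ n ∈ α := by
                  intro n
                  induction n with
                  | zero => exact hβ₀α
                  | succ n ih => exact h_limit_zsucc hαlim ih
                have hmemD : ∀ w, w ∈ ZFSet.range (fun n : ℕ => iterSucc β₀ n) ↔
                    ∃ n : ℕ, iterSucc β₀ n = w := fun w => ZFSet.mem_range
                have hδord : (⋃₀ ZFSet.range (fun n : ℕ => iterSucc β₀ n) : ZFSet).IsOrdinal :=
                  h_sUnion_ord (fun y hy => by
                    obtain ⟨n, rfl⟩ := (hmemD y).1 hy
                    exact h_iterSucc_ord hβ₀ord n)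
                have hδα : (⋃₀ ZFSet.range (fun n : ℕ => iterSucc β₀ n) : ZFSet) ⊆ α :=
                  h_sUnion_least (fun y hy => by
                    obtain ⟨n, rfl⟩ := (hmemD y).1 hy
                    exact hαord.subset_of_mem (hstage n))
                have hβ₀δ : β₀ ∈ (⋃₀ ZFSet.range (fun n : ℕ => iterSucc β₀ n) : ZFSet) :=
                  ZFSet.mem_sUnion.2 ⟨iterSucc β₀ 1, (hmemD _).2 ⟨1, rfl⟩, h_self_mem_zsucc⟩
                have hδlim : IsLimitZ (⋃₀ ZFSet.range (fun n : ℕ => iterSucc β₀ n) : ZFSet) := by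
                  refine ⟨hδord, fun h0 => ZFSet.notMem_empty _ (h0 ▸ hβ₀δ), ?_⟩
                  intro b hb
                  obtain ⟨w, hw, hbw⟩ := ZFSet.mem_sUnion.1 hb
                  obtain ⟨n, rfl⟩ := (hmemD w).1 hw
                  refine ZFSet.mem_sUnion.2 ⟨iterSucc β₀ (n+1), (hmemD _).2 ⟨n+1, rfl⟩, ?_⟩
                  have hbo : b.IsOrdinal := h_ord_mem (h_iterSucc_ord hβ₀ord n) hbw
                  rcases h_mem_or_eq_of_subset (h_zsucc_ord hbo) (h_iterSucc_ord hβ₀ord n)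
                    (h_zsucc_subset (h_iterSucc_ord hβ₀ord n) hbw) with h | h
                  · exact h_mem_zsucc_iff.2 (Or.inl h)
                  · exact h_mem_zsucc_iff.2 (Or.inr h)
                have hδeq : (⋃₀ ZFSet.range (fun n : ℕ => iterSucc β₀ n) : ZFSet) = α := by
                  rcases h_mem_or_eq_of_subset hδord hαord hδα with h | h
                  · exact absurd hδlim (hnolim _ h hβ₀δ)
                  · exact h
                have hγne : (∅ : ZFSet) ∈ γ := h_empty_mem hγord hγlim.2.1
                have hvalγ : ∀ z, (if h : ∃ n : ℕ, z = natZ n then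
                    sigF f (iterSucc β₀ h.choose) else ∅) ∈ γ := by
                  intro z
                  split
                  · exact hσγ _ (hstage _)
                  · exact hγne
                have hvalnat : ∀ n : ℕ, (if h : ∃ m : ℕ, natZ n = natZ m then
                    sigF f (iterSucc β₀ h.choose) else ∅) = sigF f (iterSucc β₀ n) := by
                  intro n
                  rw [dif_pos ⟨n, rfl⟩]
                  have hch : n = (⟨n, rfl⟩ : ∃ m : ℕ, natZ n = natZ m).choose :=
                    h_natZ_inj (⟨n, rfl⟩ : ∃ m : ℕ, natZ n = natZ m).choose_spec
                  rw [← hch]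
                have hfc : ZFSet.IsFunc ZFSet.omega γ
                    (ZFSet.image (fun z => ZFSet.pair z (if h : ∃ n : ℕ, z = natZ n then
                      sigF f (iterSucc β₀ h.choose) else ∅)) ZFSet.omega) := by
                  constructor
                  · intro w hw
                    obtain ⟨z, hz, rfl⟩ := ZFSet.mem_image.1 hw
                    exact ZFSet.pair_mem_prod.2 ⟨hz, hvalγ z⟩
                  · intro z hz
                    refine ⟨_, ZFSet.mem_image.2 ⟨z, hz, rfl⟩, ?_⟩
                    intro w' hw'
                    obtain ⟨z', hz', heq⟩ := ZFSet.mem_image.1 hw'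
                    obtain ⟨h1, h2⟩ := ZFSet.pair_injective heq
                    rw [← h2, h1]
                obtain ⟨δ', hδ'γ, hbd'⟩ := hγinacc.1.2 ZFSet.omega hγinacc.2.1 _ trivial hfc
                have hδ'T : δ' ∈ (⋃₀ UU X f α : ZFSet) := by rw [hTeq]; exact hδ'γ
                obtain ⟨y, hyU, hδ'y⟩ := ZFSet.mem_sUnion.1 hδ'T
                obtain ⟨β, hβα, hyc⟩ := (hUchar y).1 hyU
                have hβδ : β ∈ (⋃₀ ZFSet.range (fun n : ℕ => iterSucc β₀ n) : ZFSet) := by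
                  rw [hδeq]; exact hβα
                obtain ⟨w, hw, hβw⟩ := ZFSet.mem_sUnion.1 hβδ
                obtain ⟨n, rfl⟩ := (hmemD w).1 hw
                have hyc' : y ∈ app f (iterSucc β₀ n) :=
                  hchain' (iterSucc β₀ n) (hstage n) β (Or.inl hβw) hyc
                have hδ'v : δ' ∈ sigF f (iterSucc β₀ n) := hmemσ _ (hstage n) y hyc' hδ'y
                have hvδ' : sigF f (iterSucc β₀ n) ∈ δ' := by
                  have hb := hbd' (natZ n) (h_natZ_mem_omega n) _
                    (ZFSet.mem_image.2 ⟨natZ n, h_natZ_mem_omega n, rfl⟩)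
                  rw [hvalnat n] at hb
                  exact hb
                exact ZFSet.mem_asymm hδ'v hvδ'
    -- assemble the good response
    have habove' : ∀ z c, ZFSet.pair z c ∈ restrictF f α → ∀ y ∈ c, y ∈ ξ := by
      intro z c hzc y hy
      obtain ⟨hzf, hzα⟩ := h_pair_mem_restrict.1 hzc
      obtain ⟨w, hw, hu⟩ := hf.2 z hzα
      have hc : c = w := hu c hzf
      have hyz : y ∈ app f z := by
        rw [h_app_eq hw (fun w' hw' => hu w' hw'), ← hc]
        exact hy
      exact habove y ((hUchar y).2 ⟨z, hzα, hyz⟩)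
    have hqT1 : insert ξ (UU X f α) ∈ T1 κ X := by
      refine h_mem_T1.2 ⟨hqsubX, ⟨zsucc ξ, h_card_zsucc_mem hκ.1.1 hκ.2.1 hξκ, ?_⟩, honecl⟩
      intro y hy
      rcases (hmemq y).1 hy with rfl | hyU
      · exact h_self_mem_zsucc
      · exact h_mem_zsucc_iff.2 (Or.inl (habove y hyU))
    refine ⟨insert ξ (UU X f α), ξ, hξX, hTξ, habove', rfl, hqT1, ?_⟩
    intro z c hzc
    obtain ⟨hzf, hzα⟩ := h_pair_mem_restrict.1 hzc
    obtain ⟨w, hw, hu⟩ := hf.2 z hzα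
    have hc : c = w := hu c hzf
    have hcapp : c = app f z := by rw [h_app_eq hw (fun w' hw' => hu w' hw'), hc]
    rw [hcapp]
    refine h_zle_T1.2 ⟨hqT1, hCond z hzα,
      fun y hy => (hmemq y).2 (Or.inr (hcβsubU z hzα hy)), ?_⟩
    intro x' hx' hx'c y hy
    rcases (hmemq x').1 hx' with rfl | hx'U
    · exact habove y (hcβsubU z hzα hy)
    · obtain ⟨β', hβ', hx'β'⟩ := (hUchar x').1 hx'U
      rcases h_tri β' (h_ord_mem hαord hβ') z (h_ord_mem hαord hzα) with h | h | h
      · exact absurd (hchain' z hzα β' (Or.inl h) hx'β') hx'c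
      · exact absurd (hchain' z hzα β' (Or.inr h) hx'β') hx'c
      · exact (hchain β' hβ' z h).2 x' hx'β' hx'c y hy

end MainLemma

section Final
open ZFSet

theorem T1_kappa_strategically_closed' (κ X : ZFSet)
    (hκ : IsInaccessibleIn Set.univ κ) (hX : X ⊆ κ)
    (hunb : ∀ β ∈ κ, ∃ ξ ∈ X, β ∈ ξ) :
    IsStratClosedIn Set.univ (T1 κ X) (T1Order κ X) κ := by
  refine ⟨Sstrat κ X, trivial, ?_, ?_⟩
  · intro x y y' hy hy'
    rw [(h_pair_mem_Sstrat.1 hy).2, (h_pair_mem_Sstrat.1 hy').2]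
  · intro α hα f _ hdesc hfollow hII
    have hex := h_main hκ hX hunb α hα f hdesc hfollow hII
    obtain ⟨ξ, -, -, -, hqeq, hqT1, hqle⟩ := Fstrat_good hex
    have hκord : κ.IsOrdinal := hκ.1.1.1
    have hαord : α.IsOrdinal := h_ord_mem hκord hα
    refine ⟨Fstrat κ X (restrictF f α), h_pair_mem_Sstrat.2
      ⟨h_restrict_mem_PosSet hdesc.1 (hκord.subset_of_mem hα), rfl⟩, ?_, ?_⟩
    · rw [hqeq] at hqT1 ⊢
      exact hqT1
    · intro g hg
      apply hqle
      exact h_pair_mem_restrict.2 ⟨(h_isFunc_app hdesc.1 hg).1, hg⟩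

end Final

/-- **Hellsten.** If `κ` is inaccessible and `X ⊆ κ` is unbounded in `κ`, then
the 1-club shooting forcing `T¹(X)` is `κ`-strategically closed. -/
theorem T1_kappa_strategically_closed (κ X : ZFSet)
    (hκ : IsInaccessibleIn Set.univ κ) (hX : X ⊆ κ)
    (hunb : ∀ β ∈ κ, ∃ ξ ∈ X, β ∈ ξ) :
    IsStratClosedIn Set.univ (T1 κ X) (T1Order κ X) κ :=
  T1_kappa_strategically_closed' κ X hκ hX hunb
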